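/- arXiv:1807.08591 — 4 statements merged into one kernel-verified Lean document; each statement's English description precedes it below -/
import Mathlib

section
/- Let A ∈ ℂ^{n×n} be positive definite with eigenvalues λ_1 ≥ … ≥ λ_n > 0 and let D ∈ ℂ^{m×m} be Hermitian with eigenvalues μ_1 ≤ … ≤ μ_r ≤ 0 < μ_{r+1} ≤ … ≤ μ_m. Then there exists a matrix K ∈ ℂ^{n×m} with ‖K‖ < 1 such that D + K*AK is positive definite (i.e., such that the block matrix S = [[A, −AK],[K*A, D]] is a J-frame matrix) if and only if r ≤ n and λ_i + μ_i > 0 for all i = 1,…,r. -/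
open scoped Matrix ComplexOrder

/-- The spectral (operator) norm of a complex rectangular matrix. -/
noncomputable def specNorm {n m : ℕ} (K : Matrix (Fin n) (Fin m) ℂ) : ℝ :=
  ‖LinearMap.toContinuousLinearMap (Matrix.toEuclideanLin K)‖

namespace JF

/-- squared ℓ² norm of a vector -/
noncomputable def nsq {p : ℕ} (v : Fin p → ℂ) : ℝ := ∑ i, ‖v i‖ ^ 2

lemma nsq_nonneg {p : ℕ} (v : Fin p → ℂ) : 0 ≤ nsq v :=
  Finset.sum_nonneg fun i _ => by positivity

lemma nsq_pos {p : ℕ} {v : Fin p → ℂ} (hv : v ≠ 0) : 0 < nsq v := by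
  obtain ⟨i, hi⟩ := Function.ne_iff.mp hv
  exact Finset.sum_pos' (fun j _ => by positivity)
    ⟨i, Finset.mem_univ i, pow_pos (norm_pos_iff.mpr hi) 2⟩

lemma star_dot_self {p : ℕ} (v : Fin p → ℂ) :
    dotProduct (star v) v = (nsq v : ℂ) := by
  simp only [dotProduct, Pi.star_apply, nsq, Complex.ofReal_sum]
  refine Finset.sum_congr rfl fun i _ => ?_
  rw [Complex.star_def, ← Complex.normSq_eq_conj_mul_self]
  simp [← Complex.sq_norm]

/-- quadratic form of a real diagonal matrix -/
lemma star_dot_diag {p : ℕ} (d : ℕ → ℝ) (v : Fin p → ℂ) :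
    dotProduct (star v) ((Matrix.diagonal fun i : Fin p => (d i.1 : ℂ)) *ᵥ v)
      = ((∑ i : Fin p, d i.1 * ‖v i‖ ^ 2 : ℝ) : ℂ) := by
  simp only [dotProduct, Matrix.mulVec_diagonal, Pi.star_apply, Complex.ofReal_sum]
  refine Finset.sum_congr rfl fun i _ => ?_
  rw [Complex.star_def, Complex.ofReal_mul,
    show (starRingEnd ℂ) (v i) * ((d i.1 : ℂ) * v i)
      = (d i.1 : ℂ) * ((starRingEnd ℂ) (v i) * v i) by ring,
    ← Complex.normSq_eq_conj_mul_self]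
  simp [← Complex.sq_norm]

lemma unitary_mulVec_sq {p : ℕ} {U : Matrix (Fin p) (Fin p) ℂ}
    (hU : U ∈ Matrix.unitaryGroup (Fin p) ℂ) (v : Fin p → ℂ) :
    nsq (U *ᵥ v) = nsq v := by
  have h1 : Uᴴ * U = 1 := by
    simpa [Matrix.star_eq_conjTranspose] using (Unitary.mem_iff.mp hU).1
  have key : ((nsq (U *ᵥ v) : ℝ) : ℂ) = ((nsq v : ℝ) : ℂ) := by
    calc ((nsq (U *ᵥ v) : ℝ) : ℂ) = dotProduct (star (U *ᵥ v)) (U *ᵥ v) :=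
          (star_dot_self _).symm
      _ = dotProduct (Matrix.vecMul (star v) Uᴴ) (U *ᵥ v) := by
          rw [Matrix.star_mulVec]
      _ = dotProduct (star v) (Uᴴ *ᵥ (U *ᵥ v)) :=
          (Matrix.dotProduct_mulVec _ _ _).symm
      _ = dotProduct (star v) ((Uᴴ * U) *ᵥ v) := by rw [Matrix.mulVec_mulVec]
      _ = ((nsq v : ℝ) : ℂ) := by rw [h1, Matrix.one_mulVec, star_dot_self]
  exact_mod_cast key

lemma dot_conj {p : ℕ} (M V : Matrix (Fin p) (Fin p) ℂ) (c : Fin p → ℂ) :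
    dotProduct (star (V *ᵥ c)) (M *ᵥ (V *ᵥ c))
      = dotProduct (star c) ((Vᴴ * M * V) *ᵥ c) := by
  rw [Matrix.star_mulVec, ← Matrix.dotProduct_mulVec, Matrix.mulVec_mulVec,
    Matrix.mulVec_mulVec]

/-- a p × (p+1) complex matrix has nontrivial kernel -/
lemma exists_ne_zero_mulVec_eq_zero {p : ℕ} (M : Matrix (Fin p) (Fin (p + 1)) ℂ) :
    ∃ v : Fin (p + 1) → ℂ, v ≠ 0 ∧ M *ᵥ v = 0 := by
  set M' : Matrix (Fin (p + 1)) (Fin (p + 1)) ℂ :=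
    fun i j => if h : (i : ℕ) < p then M ⟨i, h⟩ j else 0 with hM'
  have hdet : M'.det = 0 := by
    apply Matrix.det_eq_zero_of_row_eq_zero (⟨p, Nat.lt_succ_self p⟩ : Fin (p + 1))
    intro j
    simp [hM']
  obtain ⟨v, hv, hv0⟩ := Matrix.exists_mulVec_eq_zero_iff.mpr hdet
  refine ⟨v, hv, ?_⟩
  ext i
  have := congrFun hv0 ⟨i.1, i.1.lt_succ_of_lt i.2⟩
  simpa [Matrix.mulVec, dotProduct, hM', i.2] using this

lemma norm_equiv_symm {p : ℕ} (v : Fin p → ℂ) :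
    ‖(WithLp.equiv 2 (Fin p → ℂ)).symm v‖ = Real.sqrt (nsq v) := by
  rw [EuclideanSpace.norm_eq]
  congr 1

lemma specNorm_nonneg {n m : ℕ} (K : Matrix (Fin n) (Fin m) ℂ) : 0 ≤ specNorm K :=
  norm_nonneg _

lemma sqrt_sq_mulVec_le {n m : ℕ} (K : Matrix (Fin n) (Fin m) ℂ) (x : Fin m → ℂ) :
    Real.sqrt (nsq (K *ᵥ x)) ≤ specNorm K * Real.sqrt (nsq x) := by
  have h := (LinearMap.toContinuousLinearMap (Matrix.toEuclideanLin K)).le_opNorm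
    ((WithLp.equiv 2 (Fin m → ℂ)).symm x)
  rw [norm_equiv_symm] at h
  have happ : (LinearMap.toContinuousLinearMap (Matrix.toEuclideanLin K))
      ((WithLp.equiv 2 (Fin m → ℂ)).symm x) = (WithLp.equiv 2 (Fin n → ℂ)).symm (K *ᵥ x) := by
    rw [LinearMap.coe_toContinuousLinearMap', Matrix.toEuclideanLin_apply]
    simp
  rwa [happ, norm_equiv_symm] at h

lemma specNorm_le_bound {n m : ℕ} (K : Matrix (Fin n) (Fin m) ℂ) {c : ℝ} (hc : 0 ≤ c)
    (h : ∀ x : Fin m → ℂ, Real.sqrt (nsq (K *ᵥ x)) ≤ c * Real.sqrt (nsq x)) :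
    specNorm K ≤ c := by
  apply ContinuousLinearMap.opNorm_le_bound _ hc
  intro v
  set x : Fin m → ℂ := WithLp.equiv 2 (Fin m → ℂ) v with hx
  have hv : v = (WithLp.equiv 2 (Fin m → ℂ)).symm x := rfl
  rw [hv]
  have happ : (LinearMap.toContinuousLinearMap (Matrix.toEuclideanLin K))
      ((WithLp.equiv 2 (Fin m → ℂ)).symm x) = (WithLp.equiv 2 (Fin n → ℂ)).symm (K *ᵥ x) := by
    rw [LinearMap.coe_toContinuousLinearMap', Matrix.toEuclideanLin_apply]
    simp
  rw [happ, norm_equiv_symm, norm_equiv_symm]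
  exact h x

lemma sq_mulVec_le {n m : ℕ} (K : Matrix (Fin n) (Fin m) ℂ) (x : Fin m → ℂ) :
    nsq (K *ᵥ x) ≤ specNorm K ^ 2 * nsq x := by
  have h := sqrt_sq_mulVec_le K x
  have h0 : 0 ≤ nsq (K *ᵥ x) := nsq_nonneg _
  have h1 : 0 ≤ nsq x := nsq_nonneg _
  have h2 := pow_le_pow_left₀ (Real.sqrt_nonneg _) h 2
  rwa [Real.sq_sqrt h0, mul_pow, Real.sq_sqrt h1] at h2

lemma sum_extend {M : Type*} [AddCommMonoid M] {m p : ℕ} (hpm : p ≤ m) (g : Fin m → M)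
    (hg : ∀ l : Fin m, p ≤ l.1 → g l = 0) :
    ∑ l : Fin m, g l = ∑ l : Fin p, g ⟨l.1, lt_of_lt_of_le l.2 hpm⟩ := by
  set f : ℕ → M := fun k => if h : k < m then g ⟨k, h⟩ else 0 with hf
  have h1 : ∑ l : Fin m, g l = ∑ k ∈ Finset.range m, f k := by
    rw [← Fin.sum_univ_eq_sum_range]
    exact Finset.sum_congr rfl fun l _ => by simp [hf, l.2]
  have h2 : ∑ k ∈ Finset.range m, f k = ∑ k ∈ Finset.range p, f k := by
    symm
    apply Finset.sum_subset (Finset.range_subset_range.mpr hpm)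
    intro k hk hkp
    simp only [Finset.mem_range] at hk hkp
    simp only [hf, dif_pos hk]
    exact hg ⟨k, hk⟩ (Nat.le_of_not_lt hkp)
  have h3 : ∑ k ∈ Finset.range p, f k = ∑ l : Fin p, g ⟨l.1, lt_of_lt_of_le l.2 hpm⟩ := by
    rw [← Fin.sum_univ_eq_sum_range]
    exact Finset.sum_congr rfl fun l _ => by simp [hf, lt_of_lt_of_le l.2 hpm]
  rw [h1, h2, h3]

lemma sum_fin_le {m p : ℕ} (hpm : p ≤ m) (f : Fin m → ℝ) (hf : ∀ j, 0 ≤ f j) :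
    ∑ l : Fin p, f ⟨l.1, lt_of_lt_of_le l.2 hpm⟩ ≤ ∑ j : Fin m, f j := by
  set F : ℕ → ℝ := fun k => if h : k < m then f ⟨k, h⟩ else 0 with hF
  have h1 : ∑ l : Fin p, f ⟨l.1, lt_of_lt_of_le l.2 hpm⟩ = ∑ k ∈ Finset.range p, F k := by
    rw [← Fin.sum_univ_eq_sum_range]
    exact Finset.sum_congr rfl fun l _ => by simp [hF, lt_of_lt_of_le l.2 hpm]
  have h3 : ∑ k ∈ Finset.range m, F k = ∑ j : Fin m, f j := by
    rw [← Fin.sum_univ_eq_sum_range]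
    exact Finset.sum_congr rfl fun l _ => by simp [hF, l.2]
  rw [h1, ← h3]
  apply Finset.sum_le_sum_of_subset_of_nonneg (Finset.range_subset_range.mpr hpm)
  intro k _ _
  by_cases hk : k < m
  · simp only [hF, dif_pos hk]; exact hf _
  · simp [hF, hk]

lemma conj_unitary {p : ℕ} {V : Matrix (Fin p) (Fin p) ℂ} (B : Matrix (Fin p) (Fin p) ℂ)
    (h1 : Vᴴ * V = 1) : Vᴴ * (V * B * Vᴴ) * V = B := by
  calc Vᴴ * (V * B * Vᴴ) * V = (Vᴴ * V) * B * (Vᴴ * V) := by simp only [Matrix.mul_assoc]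
    _ = B := by rw [h1, Matrix.one_mul, Matrix.mul_one]

lemma posdef_conj {p : ℕ} {M V : Matrix (Fin p) (Fin p) ℂ} (hM : M.PosDef)
    (hV1 : Vᴴ * V = 1) (hV2 : V * Vᴴ = 1) : (V * M * Vᴴ).PosDef := by
  rw [Matrix.posDef_iff_dotProduct_mulVec]
  constructor
  · show (V * M * Vᴴ)ᴴ = V * M * Vᴴ
    have hMh : Mᴴ = M := hM.1
    simp only [Matrix.conjTranspose_mul, Matrix.conjTranspose_conjTranspose, hMh,
      Matrix.mul_assoc]
  · intro x hx
    have hxeq : x = V *ᵥ (Vᴴ *ᵥ x) := by rw [Matrix.mulVec_mulVec, hV2, Matrix.one_mulVec]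
    have hc : Vᴴ *ᵥ x ≠ 0 := by
      intro h0
      apply hx
      rw [hxeq, h0, Matrix.mulVec_zero]
    have heq : dotProduct (star x) ((V * M * Vᴴ) *ᵥ x)
        = dotProduct (star (Vᴴ *ᵥ x)) (M *ᵥ (Vᴴ *ᵥ x)) := by
      conv_lhs => rw [hxeq]
      rw [dot_conj, conj_unitary M hV1]
    rw [heq]
    exact hM.dotProduct_mulVec_pos hc

lemma exists_bound (r : ℕ) (c : ℕ → ℝ) (h0 : ∀ j, j < r → 0 ≤ c j)
    (h1 : ∀ j, j < r → c j < 1) :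
    ∃ s : ℝ, 0 ≤ s ∧ s < 1 ∧ ∀ j, j < r → c j ≤ s := by
  rcases Nat.eq_zero_or_pos r with hr | hr
  · exact ⟨1 / 2, by norm_num, by norm_num, fun j hj => by omega⟩
  · have hne : (Finset.range r).Nonempty := ⟨0, Finset.mem_range.mpr hr⟩
    refine ⟨(Finset.range r).sup' hne c, ?_, ?_, ?_⟩
    · exact le_trans (h0 0 hr) (Finset.le_sup' c (Finset.mem_range.mpr hr))
    · exact (Finset.sup'_lt_iff hne).mpr fun j hj => h1 j (Finset.mem_range.mp hj)
    · exact fun j hj => Finset.le_sup' c (Finset.mem_range.mpr hj)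

/-- value of the quadratic form of `D + Kᴴ A K` at `V *ᵥ c` -/
lemma quad_form_eq {n m : ℕ} (lam mu : ℕ → ℝ)
    {U : Matrix (Fin n) (Fin n) ℂ} {V : Matrix (Fin m) (Fin m) ℂ}
    (hU1 : Uᴴ * U = 1) (hU2 : U * Uᴴ = 1) (hV1 : Vᴴ * V = 1)
    {A : Matrix (Fin n) (Fin n) ℂ} {D : Matrix (Fin m) (Fin m) ℂ}
    (hAeq : A = U * Matrix.diagonal (fun i : Fin n => (lam i.1 : ℂ)) * Uᴴ)
    (hDeq : D = V * Matrix.diagonal (fun j : Fin m => (mu j.1 : ℂ)) * Vᴴ)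
    (K : Matrix (Fin n) (Fin m) ℂ) (c : Fin m → ℂ) :
    dotProduct (star (V *ᵥ c)) ((D + Kᴴ * A * K) *ᵥ (V *ᵥ c))
      = (((∑ l : Fin m, mu l.1 * ‖c l‖ ^ 2)
          + ∑ j : Fin n, lam j.1 * ‖((Uᴴ * K * V) *ᵥ c) j‖ ^ 2 : ℝ) : ℂ) := by
  have hyw : K *ᵥ (V *ᵥ c) = U *ᵥ ((Uᴴ * K * V) *ᵥ c) := by
    have h : U * (Uᴴ * K * V) = K * V := by
      calc U * (Uᴴ * K * V) = (U * Uᴴ) * (K * V) := by simp only [Matrix.mul_assoc]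
        _ = K * V := by rw [hU2, Matrix.one_mul]
    rw [Matrix.mulVec_mulVec, Matrix.mulVec_mulVec, h]
  rw [Matrix.add_mulVec, dotProduct_add]
  have piece1 : dotProduct (star (V *ᵥ c)) (D *ᵥ (V *ᵥ c))
      = ((∑ l : Fin m, mu l.1 * ‖c l‖ ^ 2 : ℝ) : ℂ) := by
    rw [dot_conj]
    rw [show Vᴴ * D * V = Matrix.diagonal (fun j : Fin m => (mu j.1 : ℂ)) by
      rw [hDeq]; exact conj_unitary _ hV1]
    exact star_dot_diag mu c
  have piece2 : dotProduct (star (V *ᵥ c)) ((Kᴴ * A * K) *ᵥ (V *ᵥ c))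
      = ((∑ j : Fin n, lam j.1 * ‖((Uᴴ * K * V) *ᵥ c) j‖ ^ 2 : ℝ) : ℂ) := by
    have h2 : (Kᴴ * A * K) *ᵥ (V *ᵥ c) = Kᴴ *ᵥ (A *ᵥ (K *ᵥ (V *ᵥ c))) := by
      simp only [← Matrix.mulVec_mulVec]
    rw [h2, Matrix.dotProduct_mulVec, ← Matrix.star_mulVec, hyw, dot_conj]
    rw [show Uᴴ * A * U = Matrix.diagonal (fun i : Fin n => (lam i.1 : ℂ)) by
      rw [hAeq]; exact conj_unitary _ hU1]
    exact star_dot_diag lam _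
  rw [piece1, piece2, ← Complex.ofReal_add]

end JF

open JF

/-- Let `A ∈ ℂ^{n×n}` be positive definite with eigenvalues (nonincreasing)
`lam 0 ≥ … ≥ lam (n-1) > 0` and let `D ∈ ℂ^{m×m}` be Hermitian with eigenvalues
(nondecreasing) `mu 0 ≤ … ≤ mu (r-1) ≤ 0 < mu r ≤ … ≤ mu (m-1)`.  Then there is a strict
contraction `K ∈ ℂ^{n×m}` (`‖K‖ < 1`) such that `D + KᴴAK` is positive definite (i.e. such
that `S = [[A, −AK],[KᴴA, D]]` is a J-frame matrix) if and only if `r ≤ n` and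
`lam i + mu i > 0` for all `i < r`. -/
theorem exists_JframeMatrix_iff
    (n m r : ℕ) (hrm : r ≤ m)
    (A : Matrix (Fin n) (Fin n) ℂ) (D : Matrix (Fin m) (Fin m) ℂ)
    (hA : A.PosDef)
    (lam mu : ℕ → ℝ)
    (hlam : ∀ i j : ℕ, i ≤ j → j < n → lam j ≤ lam i)
    (hlampos : ∀ i : ℕ, i < n → 0 < lam i)
    (hmu : ∀ i j : ℕ, i ≤ j → j < m → mu i ≤ mu j)
    (hmunonpos : ∀ i : ℕ, i < r → mu i ≤ 0)
    (hmupos : ∀ i : ℕ, r ≤ i → i < m → 0 < mu i)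
    (hAdiag : ∃ U ∈ Matrix.unitaryGroup (Fin n) ℂ,
      A = U * Matrix.diagonal (fun i : Fin n => (lam i : ℂ)) * Uᴴ)
    (hDdiag : ∃ V ∈ Matrix.unitaryGroup (Fin m) ℂ,
      D = V * Matrix.diagonal (fun j : Fin m => (mu j : ℂ)) * Vᴴ) :
    (∃ K : Matrix (Fin n) (Fin m) ℂ, specNorm K < 1 ∧ (D + Kᴴ * A * K).PosDef) ↔
      (r ≤ n ∧ ∀ i : ℕ, i < r → 0 < lam i + mu i) := by
  obtain ⟨U, hU, hAeq⟩ := hAdiag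
  obtain ⟨V, hV, hDeq⟩ := hDdiag
  have hU1 : Uᴴ * U = 1 := by
    simpa [Matrix.star_eq_conjTranspose] using (Unitary.mem_iff.mp hU).1
  have hU2 : U * Uᴴ = 1 := by
    simpa [Matrix.star_eq_conjTranspose] using (Unitary.mem_iff.mp hU).2
  have hV1 : Vᴴ * V = 1 := by
    simpa [Matrix.star_eq_conjTranspose] using (Unitary.mem_iff.mp hV).1
  have hV2 : V * Vᴴ = 1 := by
    simpa [Matrix.star_eq_conjTranspose] using (Unitary.mem_iff.mp hV).2
  constructor
  · rintro ⟨K, hKn, hPD⟩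
    -- kernel construction, used for both claims
    have key : ∀ q : ℕ, q < r → q ≤ n →
        ∃ c : Fin m → ℂ, c ≠ 0 ∧ (∀ l : Fin m, q + 1 ≤ l.1 → c l = 0) ∧
          (∀ j : Fin n, j.1 < q → ((Uᴴ * K * V) *ᵥ c) j = 0) := by
      intro q hqr hqn
      have hq1m : q + 1 ≤ m := le_trans hqr hrm
      obtain ⟨v, hv, hv0⟩ := exists_ne_zero_mulVec_eq_zero
        (Matrix.of fun (j : Fin q) (l : Fin (q + 1)) =>
          (Uᴴ * K * V) ⟨j.1, lt_of_lt_of_le j.2 hqn⟩ ⟨l.1, lt_of_lt_of_le l.2 hq1m⟩)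
      refine ⟨fun l => if h : l.1 < q + 1 then v ⟨l.1, h⟩ else 0, ?_,
        fun l hl => dif_neg (by omega), ?_⟩
      · obtain ⟨l0, hl0⟩ := Function.ne_iff.mp hv
        apply Function.ne_iff.mpr
        refine ⟨⟨l0.1, lt_of_lt_of_le l0.2 hq1m⟩, ?_⟩
        show (if h : l0.1 < q + 1 then v ⟨l0.1, h⟩ else 0) ≠ 0
        rw [dif_pos l0.2]
        simpa using hl0
      · intro j hj
        have hrow := congrFun hv0 ⟨j.1, hj⟩
        simp only [Matrix.mulVec, dotProduct, Matrix.of_apply, Pi.zero_apply] at hrow ⊢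
        have hz : ∀ l : Fin m, q + 1 ≤ l.1 →
            (Uᴴ * K * V) j l * (if h : l.1 < q + 1 then v ⟨l.1, h⟩ else 0) = 0 := by
          intro l hl
          rw [dif_neg (by omega), mul_zero]
        rw [sum_extend hq1m _ hz, ← hrow]
        refine Finset.sum_congr rfl fun l _ => ?_
        rw [dif_pos l.2]
    -- first claim : r ≤ n
    have hrn : r ≤ n := by
      by_contra hno
      push_neg at hno
      obtain ⟨c, hc, hsupp, hker⟩ := key n hno le_rfl
      have hx : V *ᵥ c ≠ 0 := by
        intro h
        have h1 := unitary_mulVec_sq hV c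
        rw [h] at h1
        have h2 : nsq (0 : Fin m → ℂ) = 0 := by simp [nsq]
        have h3 := nsq_pos hc
        rw [← h1, h2] at h3
        exact lt_irrefl 0 h3
      have hq := hPD.dotProduct_mulVec_pos hx
      rw [quad_form_eq lam mu hU1 hU2 hV1 hAeq hDeq K c] at hq
      have hgt : 0 < (∑ l : Fin m, mu l.1 * ‖c l‖ ^ 2)
          + ∑ j : Fin n, lam j.1 * ‖((Uᴴ * K * V) *ᵥ c) j‖ ^ 2 := by exact_mod_cast hq
      have hS2 : (∑ j : Fin n, lam j.1 * ‖((Uᴴ * K * V) *ᵥ c) j‖ ^ 2) = 0 :=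
        Finset.sum_eq_zero fun j _ => by rw [hker j j.2]; simp
      have hS1 : (∑ l : Fin m, mu l.1 * ‖c l‖ ^ 2) ≤ 0 := by
        apply Finset.sum_nonpos
        intro l _
        by_cases hl : l.1 < n + 1
        · exact mul_nonpos_iff.mpr (Or.inr ⟨hmunonpos l.1 (by omega), by positivity⟩)
        · rw [hsupp l (by omega)]
          simp
      linarith
    refine ⟨hrn, ?_⟩
    intro i hi
    have hin : i < n := lt_of_lt_of_le hi hrn
    obtain ⟨c, hc, hsupp, hker⟩ := key i hi (le_of_lt hin)
    have hx : V *ᵥ c ≠ 0 := by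
      intro h
      have h1 := unitary_mulVec_sq hV c
      rw [h] at h1
      have h2 : nsq (0 : Fin m → ℂ) = 0 := by simp [nsq]
      have h3 := nsq_pos hc
      rw [← h1, h2] at h3
      exact lt_irrefl 0 h3
    have hq := hPD.dotProduct_mulVec_pos hx
    rw [quad_form_eq lam mu hU1 hU2 hV1 hAeq hDeq K c] at hq
    have hgt : 0 < (∑ l : Fin m, mu l.1 * ‖c l‖ ^ 2)
        + ∑ j : Fin n, lam j.1 * ‖((Uᴴ * K * V) *ᵥ c) j‖ ^ 2 := by exact_mod_cast hq
    set w : Fin n → ℂ := (Uᴴ * K * V) *ᵥ c with hwdef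
    have hS1 : (∑ l : Fin m, mu l.1 * ‖c l‖ ^ 2) ≤ mu i * nsq c := by
      rw [nsq, Finset.mul_sum]
      apply Finset.sum_le_sum
      intro l _
      by_cases hl : l.1 < i + 1
      · exact mul_le_mul_of_nonneg_right (hmu l.1 i (by omega) (lt_of_lt_of_le hi hrm))
          (by positivity)
      · rw [hsupp l (by omega)]
        simp
    have hS2 : (∑ j : Fin n, lam j.1 * ‖w j‖ ^ 2) ≤ lam i * nsq w := by
      rw [nsq, Finset.mul_sum]
      apply Finset.sum_le_sum
      intro j _
      by_cases hj : j.1 < i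
      · rw [hker j hj]
        simp
      · exact mul_le_mul_of_nonneg_right (hlam i j.1 (le_of_not_gt hj) j.2) (by positivity)
    have hsqc : 0 < nsq c := nsq_pos hc
    have hsw : nsq w < nsq c := by
      have e0 : w = Uᴴ *ᵥ (K *ᵥ (V *ᵥ c)) := by
        rw [hwdef]
        simp only [← Matrix.mulVec_mulVec]
      have hUs : Uᴴ ∈ Matrix.unitaryGroup (Fin n) ℂ := by
        rw [← Matrix.star_eq_conjTranspose]
        exact Unitary.star_mem hU
      have e1 : nsq w = nsq (K *ᵥ (V *ᵥ c)) := by rw [e0, unitary_mulVec_sq hUs]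
      have e2 := sq_mulVec_le K (V *ᵥ c)
      have e3 : nsq (V *ᵥ c) = nsq c := unitary_mulVec_sq hV c
      have e4 : specNorm K ^ 2 < 1 := by
        have h5 := specNorm_nonneg K
        nlinarith
      rw [e1, ← e3]
      have e5 : 0 < nsq (V *ᵥ c) := by rw [e3]; exact hsqc
      nlinarith
    have hlami : 0 < lam i := hlampos i hin
    by_contra hcon
    push_neg at hcon
    nlinarith [mul_lt_mul_of_pos_left hsw hlami]
  · rintro ⟨hrn, hpos⟩
    have hlam0 : ∀ j, j < r → 0 < lam j := fun j hj => hlampos j (lt_of_lt_of_le hj hrn)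
    set cfn : ℕ → ℝ := fun j => (lam j - mu j) / (2 * lam j) with hcfn
    have hc0 : ∀ j, j < r → 0 ≤ cfn j := by
      intro j hj
      have h1 := hlam0 j hj
      have h2 := hmunonpos j hj
      apply div_nonneg <;> linarith
    have hc1 : ∀ j, j < r → cfn j < 1 := by
      intro j hj
      have h1 := hlam0 j hj
      have h2 := hpos j hj
      rw [hcfn]
      simp only []
      rw [div_lt_one (by linarith)]
      linarith
    obtain ⟨s, hs0, hs1, hsb⟩ := exists_bound r cfn hc0 hc1
    set t : ℕ → ℝ := fun j => Real.sqrt (cfn j) with ht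
    set K0 : Matrix (Fin n) (Fin m) ℂ :=
      Matrix.of (fun (i : Fin n) (j : Fin m) =>
        if i.1 = j.1 ∧ j.1 < r then ((t j.1 : ℝ) : ℂ) else 0) with hK0
    refine ⟨U * K0 * Vᴴ, ?_, ?_⟩
    · -- spectral norm bound
      have hVs : Vᴴ ∈ Matrix.unitaryGroup (Fin m) ℂ := by
        rw [← Matrix.star_eq_conjTranspose]
        exact Unitary.star_mem hV
      have hbound : ∀ x : Fin m → ℂ,
          Real.sqrt (nsq ((U * K0 * Vᴴ) *ᵥ x)) ≤ Real.sqrt s * Real.sqrt (nsq x) := by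
        intro x
        have h1 : (U * K0 * Vᴴ) *ᵥ x = U *ᵥ (K0 *ᵥ (Vᴴ *ᵥ x)) := by
          simp only [← Matrix.mulVec_mulVec]
        rw [h1, unitary_mulVec_sq hU]
        set w : Fin m → ℂ := Vᴴ *ᵥ x with hw
        have hsqw : nsq w = nsq x := unitary_mulVec_sq hVs x
        have happ : ∀ i : Fin n, ‖(K0 *ᵥ w) i‖ ^ 2
            = if h : i.1 < r then cfn i.1 * ‖w ⟨i.1, lt_of_lt_of_le h hrm⟩‖ ^ 2 else 0 := by
          intro i
          by_cases hi : i.1 < r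
          · rw [dif_pos hi]
            have hval : (K0 *ᵥ w) i = ((t i.1 : ℝ) : ℂ) * w ⟨i.1, lt_of_lt_of_le hi hrm⟩ := by
              show (∑ j, K0 i j * w j) = _
              rw [Finset.sum_eq_single (⟨i.1, lt_of_lt_of_le hi hrm⟩ : Fin m)]
              · congr 1
                show (if i.1 = i.1 ∧ i.1 < r then ((t i.1 : ℝ) : ℂ) else 0) = _
                rw [if_pos ⟨rfl, hi⟩]
              · intro j _ hj
                have hj0 : K0 i j = 0 := by
                  apply if_neg
                  rintro ⟨ha, hb⟩
                  exact hj (Fin.ext ha.symm)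
                rw [hj0, zero_mul]
              · intro h
                exact absurd (Finset.mem_univ _) h
            rw [hval, norm_mul, mul_pow]
            congr 1
            have h6 : ‖((t i.1 : ℝ) : ℂ)‖ = t i.1 := by
              rw [Complex.norm_real]
              exact abs_of_nonneg (Real.sqrt_nonneg _)
            rw [h6, ht]
            exact Real.sq_sqrt (hc0 i.1 hi)
          · rw [dif_neg hi]
            have hval : (K0 *ᵥ w) i = 0 := by
              show (∑ j, K0 i j * w j) = 0
              apply Finset.sum_eq_zero
              intro j _
              have hj0 : K0 i j = 0 := by
                apply if_neg
                rintro ⟨ha, hb⟩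
                exact hi (ha ▸ hb)
              rw [hj0, zero_mul]
            rw [hval]
            simp
        have hkey : nsq (K0 *ᵥ w) ≤ s * nsq x := by
          rw [← hsqw]
          have e1 : nsq (K0 *ᵥ w)
              = ∑ l : Fin r, cfn l.1 * ‖w ⟨l.1, lt_of_lt_of_le l.2 hrm⟩‖ ^ 2 := by
            rw [nsq]
            calc (∑ i : Fin n, ‖(K0 *ᵥ w) i‖ ^ 2)
                = ∑ i : Fin n, (if h : i.1 < r then
                    cfn i.1 * ‖w ⟨i.1, lt_of_lt_of_le h hrm⟩‖ ^ 2 else 0) :=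
                  Finset.sum_congr rfl fun i _ => happ i
              _ = ∑ l : Fin r, cfn l.1 * ‖w ⟨l.1, lt_of_lt_of_le l.2 hrm⟩‖ ^ 2 := by
                  rw [sum_extend hrn _ (fun l hl => dif_neg (by omega))]
                  exact Finset.sum_congr rfl fun l _ => by rw [dif_pos l.2]
          rw [e1]
          calc (∑ l : Fin r, cfn l.1 * ‖w ⟨l.1, lt_of_lt_of_le l.2 hrm⟩‖ ^ 2)
              ≤ ∑ l : Fin r, s * ‖w ⟨l.1, lt_of_lt_of_le l.2 hrm⟩‖ ^ 2 :=
                Finset.sum_le_sum fun l _ =>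
                  mul_le_mul_of_nonneg_right (hsb l.1 l.2) (by positivity)
            _ = s * ∑ l : Fin r, ‖w ⟨l.1, lt_of_lt_of_le l.2 hrm⟩‖ ^ 2 :=
                (Finset.mul_sum _ _ _).symm
            _ ≤ s * ∑ j : Fin m, ‖w j‖ ^ 2 :=
                mul_le_mul_of_nonneg_left
                  (sum_fin_le hrm (fun j => ‖w j‖ ^ 2) (fun j => by positivity)) hs0
            _ = s * nsq w := rfl
        calc Real.sqrt (nsq (K0 *ᵥ w)) ≤ Real.sqrt (s * nsq x) := Real.sqrt_le_sqrt hkey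
          _ = Real.sqrt s * Real.sqrt (nsq x) := Real.sqrt_mul hs0 _
      have hle := specNorm_le_bound _ (Real.sqrt_nonneg s) hbound
      have hlt : Real.sqrt s < 1 := by
        rw [show (1 : ℝ) = Real.sqrt 1 by rw [Real.sqrt_one]]
        exact (Real.sqrt_lt_sqrt_iff hs0).mpr hs1
      linarith
    · -- positive definiteness
      set g : Fin m → ℂ :=
        fun j => ((mu j.1 + if j.1 < r then cfn j.1 * lam j.1 else 0 : ℝ) : ℂ) with hg
      have hdiag : Matrix.diagonal (fun j : Fin m => (mu j : ℂ))
          + K0ᴴ * (Matrix.diagonal fun i : Fin n => (lam i : ℂ)) * K0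
          = Matrix.diagonal g := by
        ext j j'
        rw [Matrix.add_apply, Matrix.mul_assoc, Matrix.mul_apply]
        simp only [Matrix.conjTranspose_apply, Matrix.diagonal_mul]
        by_cases hjj : j = j'
        · subst hjj
          rw [Matrix.diagonal_apply_eq, Matrix.diagonal_apply_eq]
          by_cases hjr : j.1 < r
          · rw [Finset.sum_eq_single (⟨j.1, lt_of_lt_of_le hjr hrn⟩ : Fin n)]
            · rw [show K0 ⟨j.1, lt_of_lt_of_le hjr hrn⟩ j = ((t j.1 : ℝ) : ℂ) from
                if_pos ⟨rfl, hjr⟩]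
              have ht2 : ((t j.1 : ℝ) : ℂ) * ((t j.1 : ℝ) : ℂ) = ((cfn j.1 : ℝ) : ℂ) := by
                rw [← Complex.ofReal_mul]
                exact_mod_cast congrArg Complex.ofReal (Real.mul_self_sqrt (hc0 _ hjr))
              rw [hg]
              simp only [if_pos hjr]
              rw [Complex.star_def, Complex.conj_ofReal]
              push_cast
              linear_combination ((lam j.1 : ℝ) : ℂ) * ht2
            · intro i _ hi
              have hi0 : K0 i j = 0 := by
                apply if_neg
                rintro ⟨ha, hb⟩
                exact hi (Fin.ext ha)
              rw [hi0]
              simp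
            · intro h
              exact absurd (Finset.mem_univ _) h
          · rw [Finset.sum_eq_zero, add_zero]
            · rw [hg]
              simp only [if_neg hjr]
              push_cast
              ring
            · intro i _
              have hi0 : K0 i j = 0 := by
                apply if_neg
                rintro ⟨ha, hb⟩
                exact hjr hb
              rw [hi0]
              simp
        · rw [Matrix.diagonal_apply_ne _ hjj, Matrix.diagonal_apply_ne _ hjj, zero_add]
          apply Finset.sum_eq_zero
          intro i _
          by_cases h1 : i.1 = j.1 ∧ j.1 < r
          · have h2 : K0 i j' = 0 := by
              apply if_neg
              rintro ⟨ha, hb⟩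
              exact hjj (Fin.ext (h1.1.symm.trans ha))
            rw [h2]
            simp
          · rw [show K0 i j = 0 from if_neg h1]
            simp
      have hgpos : ∀ j : Fin m, 0 < g j := by
        intro j
        simp only [hg]
        rw [Complex.zero_lt_real]
        by_cases hjr : j.1 < r
        · rw [if_pos hjr]
          have h1 := hlam0 j.1 hjr
          have h2 := hpos j.1 hjr
          have h3 : cfn j.1 * lam j.1 = (lam j.1 - mu j.1) / 2 := by
            rw [hcfn]
            field_simp
          rw [h3]
          linarith
        · rw [if_neg hjr]
          have := hmupos j.1 (le_of_not_gt hjr) j.2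
          linarith
      have hPD0 : (Matrix.diagonal g).PosDef := Matrix.posDef_diagonal_iff.mpr hgpos
      have hPDconj := posdef_conj hPD0 hV1 hV2
      have hKH : (U * K0 * Vᴴ)ᴴ = V * K0ᴴ * Uᴴ := by
        simp only [Matrix.conjTranspose_mul, Matrix.conjTranspose_conjTranspose,
          Matrix.mul_assoc]
      have hfin : D + (U * K0 * Vᴴ)ᴴ * A * (U * K0 * Vᴴ) = V * Matrix.diagonal g * Vᴴ := by
        rw [hKH, hAeq, hDeq]
        have e : ∀ X : Matrix (Fin n) (Fin m) ℂ, Uᴴ * (U * X) = X := fun X => by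
          rw [← Matrix.mul_assoc, hU1, Matrix.one_mul]
        have hmid : V * K0ᴴ * Uᴴ * (U * Matrix.diagonal (fun i : Fin n => (lam i : ℂ)) * Uᴴ)
              * (U * K0 * Vᴴ)
            = V * (K0ᴴ * Matrix.diagonal (fun i : Fin n => (lam i : ℂ)) * K0) * Vᴴ := by
          simp only [Matrix.mul_assoc]
          rw [e (K0 * Vᴴ), e (Matrix.diagonal (fun i : Fin n => (lam i : ℂ)) * (K0 * Vᴴ))]
        rw [hmid, ← hdiag, Matrix.mul_add, Matrix.add_mul]
      rw [hfin]
      exact hPDconj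
end

section
/- Let A ∈ ℂ^{n×n} be positive definite with eigenvalues λ_1 ≥ … ≥ λ_n > 0 and let D ∈ ℂ^{m×m} be Hermitian with eigenvalues μ_1 ≤ … ≤ μ_r ≤ 0 < μ_{r+1} ≤ … ≤ μ_m, and assume r ≤ n and λ_i + μ_i > 0 for all i = 1,…,r. Then there exists a matrix K ∈ ℂ^{n×m} with ‖K‖ < 1 such that D + K*AK is positive definite and the block matrix S = [[A, −AK],[K*A, D]] ∈ ℂ^{(n+m)×(n+m)} is diagonalizable with all its eigenvalues real and positive (i.e., S is similar to a positive definite Hermitian matrix). -/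
open scoped Matrix ComplexOrder

namespace JFrameAux


open Matrix

/-- pseudo-diagonal rectangular matrix -/
def psd (p q : ℕ) (a : ℕ → ℂ) : Matrix (Fin p) (Fin q) ℂ :=
  Matrix.of fun i j => if (i : ℕ) = (j : ℕ) then a i else 0

lemma psd_apply {p q : ℕ} (a : ℕ → ℂ) (i : Fin p) (j : Fin q) :
    psd p q a i j = if (i : ℕ) = (j : ℕ) then a i else 0 := rfl

lemma psd_ext {p q : ℕ} {a b : ℕ → ℂ} (h : ∀ i, i < p → i < q → a i = b i) :
    psd p q a = psd p q b := by
  ext i j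
  simp only [psd_apply]
  split_ifs with hij
  · exact h i i.isLt (hij ▸ j.isLt)
  · rfl

lemma psd_mul {p q s : ℕ} (a b : ℕ → ℂ) :
    psd p q a * psd q s b = psd p s (fun i => if i < q then a i * b i else 0) := by
  ext i j
  simp only [Matrix.mul_apply, psd_apply]
  rcases lt_or_ge (i : ℕ) q with h | h
  · rw [Finset.sum_eq_single (⟨(i : ℕ), h⟩ : Fin q)]
    · simp only [if_pos rfl]
      split_ifs <;> simp_all
    · intro l _ hl
      rw [if_neg, zero_mul]
      intro hil
      exact hl (by apply Fin.ext; exact hil.symm)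
    · intro hmem; exact absurd (Finset.mem_univ _) hmem
  · rw [Finset.sum_eq_zero (fun (l : Fin q) _ => by rw [if_neg (by omega), zero_mul])]
    split_ifs with h1 h2
    · omega
    · rfl
    · rfl

lemma psd_add {p q : ℕ} (a b : ℕ → ℂ) :
    psd p q a + psd p q b = psd p q (fun i => a i + b i) := by
  ext i j
  simp only [Matrix.add_apply, psd_apply]
  split_ifs <;> simp

lemma psd_neg {p q : ℕ} (a : ℕ → ℂ) :
    -psd p q a = psd p q (fun i => -a i) := by
  ext i j
  simp only [Matrix.neg_apply, psd_apply]
  split_ifs <;> simp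

lemma psd_conjT {p q : ℕ} (a : ℕ → ℂ) :
    (psd p q a)ᴴ = psd q p (fun i => star (a i)) := by
  ext i j
  simp only [Matrix.conjTranspose_apply, psd_apply]
  rcases eq_or_ne (i : ℕ) (j : ℕ) with h | h
  · rw [if_pos h.symm, if_pos h]
    rw [show a (j:ℕ) = a (i:ℕ) by rw [h]]
  · rw [if_neg (Ne.symm h), if_neg h, star_zero]

lemma psd_diagonal {p : ℕ} (a : ℕ → ℂ) :
    psd p p a = Matrix.diagonal (fun i : Fin p => a (i : ℕ)) := by
  ext i j
  simp only [psd_apply, Matrix.diagonal_apply, Fin.val_eq_val]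

lemma psd_one {p : ℕ} : psd p p (fun _ => 1) = 1 := by
  rw [psd_diagonal, Matrix.diagonal_one]

lemma psd_zero {p q : ℕ} : psd p q (fun _ => 0) = 0 := by
  ext i j
  simp [psd_apply]

lemma psd_eq_zero {p q : ℕ} {a : ℕ → ℂ} (h : ∀ i, i < p → i < q → a i = 0) :
    psd p q a = 0 := by
  rw [psd_ext h, psd_zero]

lemma psd_eq_one {p : ℕ} {a : ℕ → ℂ} (h : ∀ i, i < p → a i = 1) :
    psd p p a = 1 := by
  rw [psd_ext (fun i hi _ => h i hi), psd_one]


lemma dot_self_eq_sum_normSq {p : ℕ} (y : Fin p → ℂ) :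
    star y ⬝ᵥ y = ((∑ i, Complex.normSq (y i) : ℝ) : ℂ) := by
  push_cast
  simp only [dotProduct, Pi.star_apply]
  refine Finset.sum_congr rfl fun i _ => ?_
  rw [Complex.star_def, ← Complex.normSq_eq_conj_mul_self]

lemma sum_normSq_mulVec_unitary {p : ℕ} {U : Matrix (Fin p) (Fin p) ℂ}
    (hU : U ∈ Matrix.unitaryGroup (Fin p) ℂ) (y : Fin p → ℂ) :
    ∑ i, Complex.normSq ((U *ᵥ y) i) = ∑ i, Complex.normSq (y i) := by
  have h1 : star (U *ᵥ y) ⬝ᵥ (U *ᵥ y) = star y ⬝ᵥ y := by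
    rw [Matrix.star_mulVec, Matrix.dotProduct_mulVec, Matrix.vecMul_vecMul]
    have : Uᴴ * U = 1 := by
      have := (Matrix.mem_unitaryGroup_iff').mp hU
      rwa [Matrix.star_eq_conjTranspose] at this
    rw [this, Matrix.vecMul_one]
  rw [dot_self_eq_sum_normSq, dot_self_eq_sum_normSq] at h1
  exact_mod_cast h1

lemma posDef_unitary_conj {p : ℕ} {W : Matrix (Fin p) (Fin p) ℂ} (hW : W.PosDef)
    {V : Matrix (Fin p) (Fin p) ℂ} (hV : V ∈ Matrix.unitaryGroup (Fin p) ℂ) :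
    (V * W * Vᴴ).PosDef := by
  have hVV : V * Vᴴ = 1 := by
    have := (Matrix.mem_unitaryGroup_iff).mp hV
    rwa [Matrix.star_eq_conjTranspose] at this
  rw [Matrix.posDef_iff_dotProduct_mulVec]
  constructor
  · have h := hW.isHermitian
    unfold Matrix.IsHermitian at h ⊢
    rw [Matrix.conjTranspose_mul, Matrix.conjTranspose_mul, Matrix.conjTranspose_conjTranspose,
      h, Matrix.mul_assoc]
  · intro x hx
    have hy : Vᴴ *ᵥ x ≠ 0 := by
      intro h0
      apply hx
      have : V *ᵥ (Vᴴ *ᵥ x) = x := by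
        rw [Matrix.mulVec_mulVec, hVV, Matrix.one_mulVec]
      rw [h0, Matrix.mulVec_zero] at this
      exact this.symm
    have := (Matrix.posDef_iff_dotProduct_mulVec.mp hW).2 hy
    have hrw : star x ⬝ᵥ ((V * W * Vᴴ) *ᵥ x) = star (Vᴴ *ᵥ x) ⬝ᵥ (W *ᵥ (Vᴴ *ᵥ x)) := by
      rw [Matrix.star_mulVec, Matrix.conjTranspose_conjTranspose, ← Matrix.mulVec_mulVec,
        ← Matrix.mulVec_mulVec, Matrix.dotProduct_mulVec (star x) V]
    rwa [hrw]


lemma psd_mulVec {n m : ℕ} (a : ℕ → ℂ) (x : Fin m → ℂ) (i : Fin n) :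
    (psd n m a *ᵥ x) i = if h : (i : ℕ) < m then a i * x ⟨(i : ℕ), h⟩ else 0 := by
  simp only [Matrix.mulVec, dotProduct, psd_apply]
  split_ifs with h
  · rw [Finset.sum_eq_single (⟨(i : ℕ), h⟩ : Fin m)]
    · rw [if_pos rfl]
    · intro l _ hl
      rw [if_neg (fun hil => hl (by apply Fin.ext; exact hil.symm)), zero_mul]
    · intro hmem; exact absurd (Finset.mem_univ _) hmem
  · apply Finset.sum_eq_zero
    intro l _
    rw [if_neg (by omega), zero_mul]

lemma sum_normSq_psd_mulVec_le {n m : ℕ} {a : ℕ → ℂ} {c : ℝ} (hc : 0 ≤ c)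
    (ha : ∀ i, i < n → i < m → ‖a i‖ ≤ c) (x : Fin m → ℂ) :
    ∑ i, Complex.normSq ((psd n m a *ᵥ x) i) ≤ c ^ 2 * ∑ j, Complex.normSq (x j) := by
  set G : ℕ → ℝ := fun i => if h : i < m then c ^ 2 * Complex.normSq (x ⟨i, h⟩) else 0 with hG
  have hGnonneg : ∀ i, 0 ≤ G i := by
    intro i
    simp only [hG]
    split_ifs
    · exact mul_nonneg (sq_nonneg c) (Complex.normSq_nonneg _)
    · exact le_rfl
  have h1 : ∀ i : Fin n, Complex.normSq ((psd n m a *ᵥ x) i) ≤ G (i : ℕ) := by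
    intro i
    rw [psd_mulVec]
    simp only [hG]
    split_ifs with h
    · rw [Complex.normSq_mul]
      have h2 : Complex.normSq (a (i : ℕ)) ≤ c ^ 2 := by
        have := ha (i : ℕ) i.isLt h
        have h3 : ‖a (i : ℕ)‖ ^ 2 ≤ c ^ 2 := by
          apply pow_le_pow_left₀ (norm_nonneg _) this
        rwa [Complex.sq_norm] at h3
      have := Complex.normSq_nonneg (x ⟨(i : ℕ), h⟩)
      nlinarith [Complex.normSq_nonneg (a (i : ℕ))]
    · simp
  calc ∑ i : Fin n, Complex.normSq ((psd n m a *ᵥ x) i)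
      ≤ ∑ i : Fin n, G (i : ℕ) := Finset.sum_le_sum (fun i _ => h1 i)
    _ = ∑ i ∈ Finset.range n, G i := Fin.sum_univ_eq_sum_range G n
    _ ≤ ∑ i ∈ Finset.range m, G i := by
        rw [← Finset.sum_filter_of_ne (f := G) (s := Finset.range n)
          (p := fun i => i < m) (by intro i _ hne; by_contra h; simp [hG, dif_neg h] at hne)]
        apply Finset.sum_le_sum_of_subset_of_nonneg
        · intro i hi
          simp only [Finset.mem_filter, Finset.mem_range] at hi ⊢
          exact hi.2
        · intro i _ _; exact hGnonneg i
    _ = ∑ j : Fin m, G (j : ℕ) := (Fin.sum_univ_eq_sum_range G m).symm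
    _ = c ^ 2 * ∑ j, Complex.normSq (x j) := by
        rw [Finset.mul_sum]
        refine Finset.sum_congr rfl fun j _ => ?_
        simp only [hG, dif_pos j.isLt]

lemma specNorm_le_of_bound {n m : ℕ} {K : Matrix (Fin n) (Fin m) ℂ} {c : ℝ} (hc : 0 ≤ c)
    (h : ∀ x : Fin m → ℂ, ∑ i, Complex.normSq ((K *ᵥ x) i) ≤ c ^ 2 * ∑ j, Complex.normSq (x j)) :
    specNorm K ≤ c := by
  apply ContinuousLinearMap.opNorm_le_bound _ hc
  intro x
  have happ : (LinearMap.toContinuousLinearMap (Matrix.toEuclideanLin K)) x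
      = (WithLp.equiv 2 (Fin n → ℂ)).symm (K *ᵥ (WithLp.equiv 2 (Fin m → ℂ)) x) := rfl
  rw [happ, EuclideanSpace.norm_eq, EuclideanSpace.norm_eq]
  have hsum := h ((WithLp.equiv 2 (Fin m → ℂ)) x)
  have e1 : ∀ i : Fin n, ‖(WithLp.equiv 2 (Fin n → ℂ)).symm (K *ᵥ (WithLp.equiv 2 (Fin m → ℂ)) x) i‖ ^ 2
      = Complex.normSq ((K *ᵥ (WithLp.equiv 2 (Fin m → ℂ)) x) i) := by
    intro i
    rw [← Complex.sq_norm]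
    rfl
  have e2 : ∀ j : Fin m, ‖x j‖ ^ 2 = Complex.normSq (((WithLp.equiv 2 (Fin m → ℂ)) x) j) := by
    intro j
    rw [← Complex.sq_norm]
    rfl
  simp only [e1, e2]
  calc Real.sqrt (∑ i, Complex.normSq ((K *ᵥ (WithLp.equiv 2 (Fin m → ℂ)) x) i))
      ≤ Real.sqrt (c ^ 2 * ∑ j, Complex.normSq (((WithLp.equiv 2 (Fin m → ℂ)) x) j)) :=
        Real.sqrt_le_sqrt hsum
    _ = c * Real.sqrt (∑ j, Complex.normSq (((WithLp.equiv 2 (Fin m → ℂ)) x) j)) := by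
        rw [Real.sqrt_mul (sq_nonneg c), Real.sqrt_sq hc]



section Scalar
variable {a b c tp tm : ℝ}

lemma L1 : a * (a*c) + (-(a*c)) * (a - tp) = (a*c) * tp := by ring
lemma L3 (hc2 : 8*a^2*c^2 = (a-b)^2 - 4*a*b)
    (htp : tp = (a+b)*(2+Real.sqrt 2)/4) :
    (c*a)*(a*c) + b*(a-tp) = (a-tp)*tp := by
  have hσ : Real.sqrt 2 ^ 2 = 2 := Real.sq_sqrt (by norm_num)
  subst htp
  linear_combination hc2/8 + ((a+b)^2/16) * hσ
lemma L4 (hc2 : 8*a^2*c^2 = (a-b)^2 - 4*a*b)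
    (htm : tm = (a+b)*(2-Real.sqrt 2)/4) :
    (c*a)*(a*c) + b*(a-tm) = (a-tm)*tm := by
  have hσ : Real.sqrt 2 ^ 2 = 2 := Real.sq_sqrt (by norm_num)
  subst htm
  linear_combination hc2/8 + ((a+b)^2/16) * hσ
lemma L5 (ha : 0 < a) (hab : 0 < a + b) (hcpos : 0 < c)
    (htp : tp = (a+b)*(2+Real.sqrt 2)/4) (htm : tm = (a+b)*(2-Real.sqrt 2)/4) :
    (a*c)*((a-tm)/(a*c*(tp-tm))) + (a*c)*((tp-a)/(a*c*(tp-tm))) = 1 := by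
  have hσpos : (0:ℝ) < Real.sqrt 2 := Real.sqrt_pos.mpr (by norm_num)
  have hδ : tp - tm = (a+b)*Real.sqrt 2/2 := by rw [htp, htm]; ring
  have hδne : a*c*(tp-tm) ≠ 0 := by
    rw [hδ]; positivity
  have hδne' : tp - tm ≠ 0 := by rw [hδ]; positivity
  field_simp
  ring
lemma L7 : (a-tp)*((a-tm)/(a*c*(tp-tm))) + (a-tm)*((tp-a)/(a*c*(tp-tm))) = 0 := by
  ring
lemma L8 (ha : 0 < a) (hab : 0 < a + b) (hcpos : 0 < c)
    (htp : tp = (a+b)*(2+Real.sqrt 2)/4) (htm : tm = (a+b)*(2-Real.sqrt 2)/4) :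
    (a-tp)*(-(a*c)/(a*c*(tp-tm))) + (a-tm)*((a*c)/(a*c*(tp-tm))) = 1 := by
  have hσpos : (0:ℝ) < Real.sqrt 2 := Real.sqrt_pos.mpr (by norm_num)
  have hδ : tp - tm = (a+b)*Real.sqrt 2/2 := by rw [htp, htm]; ring
  have hδne : a*c*(tp-tm) ≠ 0 := by rw [hδ]; positivity
  have hδne' : tp - tm ≠ 0 := by rw [hδ]; positivity
  field_simp
  ring
end Scalar
variable (r : ℕ) (lam mu : ℕ → ℝ)

noncomputable def kR (i : ℕ) : ℝ :=
  if i < r then Real.sqrt (((lam i - mu i)^2 - 4*lam i*mu i)/(8*(lam i)^2)) else 0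

noncomputable def tpR (i : ℕ) : ℝ := (lam i + mu i)*(2+Real.sqrt 2)/4
noncomputable def tmR (i : ℕ) : ℝ := (lam i + mu i)*(2-Real.sqrt 2)/4

noncomputable def paR (i : ℕ) : ℝ := if i < r then lam i * kR r lam mu i else 1
noncomputable def pbR (i : ℕ) : ℝ := if i < r then lam i * kR r lam mu i else 0
noncomputable def pcR (i : ℕ) : ℝ := if i < r then lam i - tpR lam mu i else 0
noncomputable def pdR (i : ℕ) : ℝ := if i < r then lam i - tmR lam mu i else 1

noncomputable def dR (i : ℕ) : ℝ := lam i * kR r lam mu i * (tpR lam mu i - tmR lam mu i)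

noncomputable def qaR (i : ℕ) : ℝ := if i < r then (lam i - tmR lam mu i)/dR r lam mu i else 1
noncomputable def qbR (i : ℕ) : ℝ := if i < r then -(lam i * kR r lam mu i)/dR r lam mu i else 0
noncomputable def qcR (i : ℕ) : ℝ := if i < r then (tpR lam mu i - lam i)/dR r lam mu i else 0
noncomputable def qdR (i : ℕ) : ℝ := if i < r then (lam i * kR r lam mu i)/dR r lam mu i else 1

noncomputable def daR (i : ℕ) : ℝ := if i < r then tpR lam mu i else lam i
noncomputable def dbR (i : ℕ) : ℝ := if i < r then tmR lam mu i else mu i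

variable {r lam mu}

lemma kR_sq {i : ℕ} (hi : i < r) (ha : 0 < lam i) (hb : mu i ≤ 0) :
    8*(lam i)^2*(kR r lam mu i)^2 = (lam i - mu i)^2 - 4*lam i*mu i := by
  have hnum : 0 ≤ (lam i - mu i)^2 - 4*lam i*mu i := by
    nlinarith [sq_nonneg (lam i - mu i), mul_nonneg ha.le (neg_nonneg.mpr hb)]
  rw [kR, if_pos hi]
  rw [Real.sq_sqrt (div_nonneg hnum (by positivity))]
  field_simp

lemma kR_pos {i : ℕ} (hi : i < r) (ha : 0 < lam i) (hb : mu i ≤ 0) : 0 < kR r lam mu i := by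
  rw [kR, if_pos hi]
  apply Real.sqrt_pos.mpr
  have hd : 0 < lam i - mu i := by linarith
  have hnum : 0 < (lam i - mu i)^2 - 4*lam i*mu i := by
    nlinarith [mul_pos hd hd, mul_nonneg ha.le (neg_nonneg.mpr hb)]
  exact div_pos hnum (by positivity)

lemma kR_nonneg (i : ℕ) : 0 ≤ kR r lam mu i := by
  rw [kR]; split_ifs
  · exact Real.sqrt_nonneg _
  · exact le_rfl

lemma kR_lt_one {i : ℕ} (hi : i < r) (ha : 0 < lam i) (hb : mu i ≤ 0) (hab : 0 < lam i + mu i) :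
    kR r lam mu i < 1 := by
  rw [kR, if_pos hi]
  rw [Real.sqrt_lt' one_pos]
  rw [div_lt_iff₀ (by positivity)]
  nlinarith [mul_pos (show (0:ℝ) < 7*lam i - mu i by linarith) hab]

lemma kR_zero {i : ℕ} (hi : ¬ i < r) : kR r lam mu i = 0 := by rw [kR, if_neg hi]

lemma sqrt2_lt_two : Real.sqrt 2 < 2 := by
  rw [Real.sqrt_lt' (by norm_num : (0:ℝ) < 2)]
  norm_num

lemma tpR_pos {i : ℕ} (hab : 0 < lam i + mu i) : 0 < tpR lam mu i := by
  rw [tpR]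
  have := Real.sqrt_nonneg 2
  positivity

lemma tmR_pos {i : ℕ} (hab : 0 < lam i + mu i) : 0 < tmR lam mu i := by
  rw [tmR]
  have h2 := sqrt2_lt_two
  have h3 : 0 < 2 - Real.sqrt 2 := by linarith
  positivity

end JFrameAux

open JFrameAux Matrix
set_option maxHeartbeats 4000000 in
/-- Let `A ∈ ℂ^{n×n}` be positive definite with eigenvalues (nonincreasing)
`lam 0 ≥ … ≥ lam (n-1) > 0`, let `D ∈ ℂ^{m×m}` be Hermitian with eigenvalues
(nondecreasing) `mu 0 ≤ … ≤ mu (r-1) ≤ 0 < mu r ≤ … ≤ mu (m-1)`, and assume `r ≤ n` and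
`lam i + mu i > 0` for all `i < r`.  Then there is a strict contraction `K` (`‖K‖ < 1`)
such that `D + KᴴAK` is positive definite and the block matrix `S = [[A, −AK],[KᴴA, D]]`
is diagonalizable with all eigenvalues real and positive, i.e. `S` is similar to a positive
definite Hermitian (diagonal) matrix. -/
theorem exists_JframeMatrix_similar_to_Hermitian
    (n m r : ℕ) (hrm : r ≤ m)
    (A : Matrix (Fin n) (Fin n) ℂ) (D : Matrix (Fin m) (Fin m) ℂ)
    (hA : A.PosDef)
    (lam mu : ℕ → ℝ)
    (hlam : ∀ i j : ℕ, i ≤ j → j < n → lam j ≤ lam i)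
    (hlampos : ∀ i : ℕ, i < n → 0 < lam i)
    (hmu : ∀ i j : ℕ, i ≤ j → j < m → mu i ≤ mu j)
    (hmunonpos : ∀ i : ℕ, i < r → mu i ≤ 0)
    (hmupos : ∀ i : ℕ, r ≤ i → i < m → 0 < mu i)
    (hAdiag : ∃ U ∈ Matrix.unitaryGroup (Fin n) ℂ,
      A = U * Matrix.diagonal (fun i : Fin n => (lam i : ℂ)) * Uᴴ)
    (hDdiag : ∃ V ∈ Matrix.unitaryGroup (Fin m) ℂ,
      D = V * Matrix.diagonal (fun j : Fin m => (mu j : ℂ)) * Vᴴ)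
    (hrn : r ≤ n)
    (hsum : ∀ i : ℕ, i < r → 0 < lam i + mu i) :
    ∃ K : Matrix (Fin n) (Fin m) ℂ, specNorm K < 1 ∧ (D + Kᴴ * A * K).PosDef ∧
      ∃ (P : Matrix (Fin n ⊕ Fin m) (Fin n ⊕ Fin m) ℂ) (d : (Fin n ⊕ Fin m) → ℝ),
        IsUnit P ∧ (∀ idx, 0 < d idx) ∧
        Matrix.fromBlocks A (-(A * K)) (Kᴴ * A) D =
          P * Matrix.diagonal (fun idx => ((d idx : ℝ) : ℂ)) * P⁻¹ := by
  classical
  obtain ⟨U, hU, hAeq⟩ := hAdiag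
  obtain ⟨V, hV, hDeq⟩ := hDdiag
  have hU'U : Uᴴ * U = 1 := by
    have := (Matrix.mem_unitaryGroup_iff').mp hU
    rwa [Matrix.star_eq_conjTranspose] at this
  have hUU' : U * Uᴴ = 1 := by
    have := (Matrix.mem_unitaryGroup_iff).mp hU
    rwa [Matrix.star_eq_conjTranspose] at this
  have hV'V : Vᴴ * V = 1 := by
    have := (Matrix.mem_unitaryGroup_iff').mp hV
    rwa [Matrix.star_eq_conjTranspose] at this
  have hVV' : V * Vᴴ = 1 := by
    have := (Matrix.mem_unitaryGroup_iff).mp hV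
    rwa [Matrix.star_eq_conjTranspose] at this
  have haf : ∀ i : ℕ, i < r → 0 < lam i := fun i hi => hlampos i (lt_of_lt_of_le hi hrn)
  set LamC : Matrix (Fin n) (Fin n) ℂ := psd n n (fun i => ((lam i : ℝ) : ℂ)) with hLamC
  set MuC : Matrix (Fin m) (Fin m) ℂ := psd m m (fun i => ((mu i : ℝ) : ℂ)) with hMuC
  set K0 : Matrix (Fin n) (Fin m) ℂ := psd n m (fun i => ((kR r lam mu i : ℝ) : ℂ)) with hK0
  set Kt : Matrix (Fin m) (Fin n) ℂ := psd m n (fun i => ((kR r lam mu i : ℝ) : ℂ)) with hKt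
  have hAeq' : A = U * LamC * Uᴴ := by rw [hAeq, hLamC, psd_diagonal]
  have hDeq' : D = V * MuC * Vᴴ := by rw [hDeq, hMuC, psd_diagonal]
  have hUc : ∀ (X : Matrix (Fin n) (Fin m) ℂ), Uᴴ * (U * X) = X := fun X => by
    rw [← Matrix.mul_assoc, hU'U, Matrix.one_mul]
  have hUcn : ∀ (X : Matrix (Fin n) (Fin n) ℂ), Uᴴ * (U * X) = X := fun X => by
    rw [← Matrix.mul_assoc, hU'U, Matrix.one_mul]
  have hKH : (U * K0 * Vᴴ)ᴴ = V * Kt * Uᴴ := by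
    rw [Matrix.conjTranspose_mul, Matrix.conjTranspose_mul, Matrix.conjTranspose_conjTranspose,
      hK0, hKt, psd_conjT, Matrix.mul_assoc]
    congr 2
    apply psd_ext
    intro i _ _
    simp only [Complex.star_def, Complex.conj_ofReal]
  have hLK : LamC * K0 = psd n m (fun i => ((lam i * kR r lam mu i : ℝ) : ℂ)) := by
    rw [hLamC, hK0, psd_mul]
    apply psd_ext
    intro i hin _
    rw [if_pos hin]
    push_cast
    ring
  have hKtL : Kt * LamC = psd m n (fun i => ((kR r lam mu i * lam i : ℝ) : ℂ)) := by
    rw [hLamC, hKt, psd_mul]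
    apply psd_ext
    intro i _ hin
    by_cases h : (i : ℕ) < n
    · rw [if_pos h]; push_cast; ring
    · rw [if_neg h, kR_zero (show ¬ (i:ℕ) < r by omega)]
      push_cast
      ring
  have hAK : A * (U * K0 * Vᴴ) = U * psd n m (fun i => ((lam i * kR r lam mu i : ℝ) : ℂ)) * Vᴴ := by
    rw [hAeq']
    simp only [Matrix.mul_assoc]
    rw [hUc (K0 * Vᴴ)]
    rw [show LamC * (K0 * Vᴴ) = LamC * K0 * Vᴴ from (Matrix.mul_assoc _ _ _).symm, hLK]
  have hKA : (U * K0 * Vᴴ)ᴴ * A = V * psd m n (fun i => ((kR r lam mu i * lam i : ℝ) : ℂ)) * Uᴴ := by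
    rw [hKH, hAeq']
    simp only [Matrix.mul_assoc]
    rw [hUcn (LamC * Uᴴ)]
    rw [show Kt * (LamC * Uᴴ) = Kt * LamC * Uᴴ from (Matrix.mul_assoc _ _ _).symm, hKtL]
  have hKAK : (U * K0 * Vᴴ)ᴴ * A * (U * K0 * Vᴴ) = V * (Kt * LamC * K0) * Vᴴ := by
    rw [hKH, hAeq']
    simp only [Matrix.mul_assoc]
    rw [hUc (LamC * (Uᴴ * (U * (K0 * Vᴴ))))]
    rw [hUc (K0 * Vᴴ)]
  refine ⟨U * K0 * Vᴴ, ?_, ?_, ?_⟩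
  · -- spectral norm bound
    obtain ⟨cb, hcb0, hcb1, hcbk⟩ : ∃ cb : ℝ, 0 ≤ cb ∧ cb < 1 ∧ ∀ i, kR r lam mu i ≤ cb := by
      rcases Nat.eq_zero_or_pos r with hr0 | hrpos
      · exact ⟨0, le_rfl, one_pos, fun i => by rw [kR_zero (by omega)]⟩
      · have hne : ((Finset.range r).image (kR r lam mu)).Nonempty := by
          apply Finset.Nonempty.image
          exact ⟨0, Finset.mem_range.mpr hrpos⟩
        set cb := ((Finset.range r).image (kR r lam mu)).max' hne with hcb
        have hmem : ∀ i, i < r → kR r lam mu i ≤ cb := fun i hi =>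
          Finset.le_max' _ _ (Finset.mem_image_of_mem _ (Finset.mem_range.mpr hi))
        have hcb0 : 0 ≤ cb := le_trans (kR_nonneg 0) (hmem 0 hrpos)
        refine ⟨cb, hcb0, ?_, ?_⟩
        · rw [hcb, Finset.max'_lt_iff]
          intro y hy
          obtain ⟨i, hi, rfl⟩ := Finset.mem_image.mp hy
          rw [Finset.mem_range] at hi
          exact kR_lt_one hi (haf i hi) (hmunonpos i hi) (hsum i hi)
        · intro i
          by_cases hi : i < r
          · exact hmem i hi
          · rw [kR_zero hi]; exact hcb0
    have hbound : ∀ x : Fin m → ℂ,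
        ∑ i, Complex.normSq (((U * K0 * Vᴴ) *ᵥ x) i) ≤ cb ^ 2 * ∑ j, Complex.normSq (x j) := by
      intro x
      have hsplit : (U * K0 * Vᴴ) *ᵥ x = U *ᵥ (K0 *ᵥ (Vᴴ *ᵥ x)) := by
        rw [Matrix.mulVec_mulVec, Matrix.mulVec_mulVec]
      rw [hsplit, sum_normSq_mulVec_unitary hU]
      have hVH : Vᴴ ∈ Matrix.unitaryGroup (Fin m) ℂ := by
        rw [← Matrix.star_eq_conjTranspose]
        exact Unitary.star_mem hV
      calc ∑ i, Complex.normSq ((K0 *ᵥ (Vᴴ *ᵥ x)) i)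
          ≤ cb ^ 2 * ∑ j, Complex.normSq ((Vᴴ *ᵥ x) j) := by
            rw [hK0]
            apply sum_normSq_psd_mulVec_le hcb0
            intro i _ _
            simp only [Complex.norm_real, Real.norm_eq_abs, abs_of_nonneg (kR_nonneg i)]
            exact hcbk i
        _ = cb ^ 2 * ∑ j, Complex.normSq (x j) := by
            rw [sum_normSq_mulVec_unitary hVH]
    exact lt_of_le_of_lt (specNorm_le_of_bound hcb0 hbound) hcb1
  · -- positive definiteness of D + KᴴAK
    have hDK : D + (U * K0 * Vᴴ)ᴴ * A * (U * K0 * Vᴴ)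
        = V * (MuC + Kt * LamC * K0) * Vᴴ := by
      rw [hDeq', hKAK, Matrix.mul_add, Matrix.add_mul]
    rw [hDK]
    have hprod : MuC + Kt * LamC * K0
        = psd m m (fun i => ((mu i + kR r lam mu i ^ 2 * lam i : ℝ) : ℂ)) := by
      rw [hKtL, hK0, hMuC, psd_mul, psd_add]
      apply psd_ext
      intro i him _
      by_cases hin : (i : ℕ) < n
      · rw [if_pos hin]
        push_cast
        ring
      · rw [if_neg hin, kR_zero (show ¬ (i:ℕ) < r by omega)]
        push_cast
        ring
    rw [hprod]
    have hpd : (psd m m (fun i => ((mu i + kR r lam mu i ^ 2 * lam i : ℝ) : ℂ))).PosDef := by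
      rw [psd_diagonal]
      apply Matrix.PosDef.diagonal
      intro i
      rw [Complex.zero_lt_real]
      by_cases hir : (i : ℕ) < r
      · have ha := haf i hir
        have hb := hmunonpos i hir
        have hc2 := kR_sq hir ha hb
        have hab := hsum (i : ℕ) hir
        nlinarith [hc2, mul_pos hab hab, ha, mul_pos ha ha]
      · rw [kR_zero hir]
        have := hmupos i (by omega) i.isLt
        nlinarith
    exact posDef_unitary_conj hpd hV
  · -- diagonalization
    set paC : ℕ → ℂ := fun i => ((paR r lam mu i : ℝ) : ℂ) with hpaC
    set pbC : ℕ → ℂ := fun i => ((pbR r lam mu i : ℝ) : ℂ) with hpbC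
    set pcC : ℕ → ℂ := fun i => ((pcR r lam mu i : ℝ) : ℂ) with hpcC
    set pdC : ℕ → ℂ := fun i => ((pdR r lam mu i : ℝ) : ℂ) with hpdC
    set qaC : ℕ → ℂ := fun i => ((qaR r lam mu i : ℝ) : ℂ) with hqaC
    set qbC : ℕ → ℂ := fun i => ((qbR r lam mu i : ℝ) : ℂ) with hqbC
    set qcC : ℕ → ℂ := fun i => ((qcR r lam mu i : ℝ) : ℂ) with hqcC
    set qdC : ℕ → ℂ := fun i => ((qdR r lam mu i : ℝ) : ℂ) with hqdC
    set daC : ℕ → ℂ := fun i => ((daR r lam mu i : ℝ) : ℂ) with hdaC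
    set dbC : ℕ → ℂ := fun i => ((dbR r lam mu i : ℝ) : ℂ) with hdbC
    set P0 : Matrix (Fin n ⊕ Fin m) (Fin n ⊕ Fin m) ℂ :=
      Matrix.fromBlocks (psd n n paC) (psd n m pbC) (psd m n pcC) (psd m m pdC) with hP0
    set Q0 : Matrix (Fin n ⊕ Fin m) (Fin n ⊕ Fin m) ℂ :=
      Matrix.fromBlocks (psd n n qaC) (psd n m qbC) (psd m n qcC) (psd m m qdC) with hQ0
    set DB : Matrix (Fin n ⊕ Fin m) (Fin n ⊕ Fin m) ℂ :=
      Matrix.fromBlocks (psd n n daC) 0 0 (psd m m dbC) with hDB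
    set S0 : Matrix (Fin n ⊕ Fin m) (Fin n ⊕ Fin m) ℂ :=
      Matrix.fromBlocks LamC (psd n m (fun i => -((lam i * kR r lam mu i : ℝ) : ℂ)))
        (psd m n (fun i => ((kR r lam mu i * lam i : ℝ) : ℂ))) MuC with hS0
    set Ub : Matrix (Fin n ⊕ Fin m) (Fin n ⊕ Fin m) ℂ :=
      Matrix.fromBlocks U 0 0 V with hUbdef
    -- P0 * Q0 = 1
    have e11 : psd n n paC * psd n n qaC + psd n m pbC * psd m n qcC
        = (1 : Matrix (Fin n) (Fin n) ℂ) := by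
      rw [psd_mul, psd_mul, psd_add]
      apply psd_eq_one
      intro i hin
      by_cases hir : i < r
      · have him : i < m := lt_of_lt_of_le hir hrm
        have ha := haf i hir
        have hab := hsum i hir
        have hc := kR_pos hir ha (hmunonpos i hir)
        rw [if_pos hin, if_pos him]
        simp only [hpaC, hqaC, hpbC, hqcC, paR, qaR, pbR, qcR, dR, tpR, tmR, if_pos hir]
        norm_cast
        linear_combination L5 ha hab hc rfl rfl
      · rw [if_pos hin]
        simp only [hpaC, hqaC, hpbC, hqcC, paR, qaR, pbR, qcR, if_neg hir]
        split_ifs <;> norm_num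
    have e12 : psd n n paC * psd n m qbC + psd n m pbC * psd m m qdC
        = (0 : Matrix (Fin n) (Fin m) ℂ) := by
      rw [psd_mul, psd_mul, psd_add]
      apply psd_eq_zero
      intro i hin him
      rw [if_pos hin, if_pos him]
      by_cases hir : i < r
      · simp only [hpaC, hqbC, hpbC, hqdC, paR, qbR, pbR, qdR, dR, tpR, tmR, if_pos hir]
        norm_cast
        ring
      · simp only [hpaC, hqbC, hpbC, hqdC, paR, qbR, pbR, qdR, if_neg hir]
        norm_num
    have e21 : psd m n pcC * psd n n qaC + psd m m pdC * psd m n qcC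
        = (0 : Matrix (Fin m) (Fin n) ℂ) := by
      rw [psd_mul, psd_mul, psd_add]
      apply psd_eq_zero
      intro i him hin
      rw [if_pos hin, if_pos him]
      by_cases hir : i < r
      · simp only [hpcC, hqaC, hpdC, hqcC, pcR, qaR, pdR, qcR, dR, tpR, tmR, if_pos hir]
        norm_cast
        ring
      · simp only [hpcC, hqaC, hpdC, hqcC, pcR, qaR, pdR, qcR, if_neg hir]
        norm_num
    have e22 : psd m n pcC * psd n m qbC + psd m m pdC * psd m m qdC
        = (1 : Matrix (Fin m) (Fin m) ℂ) := by
      rw [psd_mul, psd_mul, psd_add]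
      apply psd_eq_one
      intro i him
      rw [if_pos him]
      by_cases hir : i < r
      · have hin : i < n := lt_of_lt_of_le hir hrn
        have ha := haf i hir
        have hab := hsum i hir
        have hc := kR_pos hir ha (hmunonpos i hir)
        rw [if_pos hin]
        simp only [hpcC, hqbC, hpdC, hqdC, pcR, qbR, pdR, qdR, dR, tpR, tmR, if_pos hir]
        norm_cast
        linear_combination L8 ha hab hc rfl rfl
      · simp only [hpcC, hqbC, hpdC, hqdC, pcR, qbR, pdR, qdR, if_neg hir]
        split_ifs <;> norm_num
    have hP0Q0 : P0 * Q0 = 1 := by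
      rw [hP0, hQ0, Matrix.fromBlocks_multiply, e11, e12, e21, e22, Matrix.fromBlocks_one]
    -- S0 * P0 = P0 * DB
    have f11 : LamC * psd n n paC + psd n m (fun i => -((lam i * kR r lam mu i : ℝ) : ℂ)) * psd m n pcC
        = psd n n paC * psd n n daC := by
      rw [hLamC, psd_mul, psd_mul, psd_mul, psd_add]
      apply psd_ext
      intro i hin _
      rw [if_pos hin, if_pos hin]
      by_cases hir : i < r
      · have him : i < m := lt_of_lt_of_le hir hrm
        rw [if_pos him]
        simp only [hpaC, hpcC, hdaC, paR, pcR, daR, tpR, tmR, if_pos hir]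
        norm_cast
        ring
      · simp only [hpaC, hpcC, hdaC, paR, pcR, daR, if_neg hir, kR_zero hir]
        split_ifs <;> push_cast <;> ring
    have f12 : LamC * psd n m pbC + psd n m (fun i => -((lam i * kR r lam mu i : ℝ) : ℂ)) * psd m m pdC
        = psd n m pbC * psd m m dbC := by
      rw [hLamC, psd_mul, psd_mul, psd_mul, psd_add]
      apply psd_ext
      intro i hin him
      rw [if_pos hin, if_pos him, if_pos him]
      by_cases hir : i < r
      · simp only [hpbC, hpdC, hdbC, pbR, pdR, dbR, tpR, tmR, if_pos hir]
        norm_cast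
        ring
      · simp only [hpbC, hpdC, hdbC, pbR, pdR, dbR, if_neg hir, kR_zero hir]
        push_cast
        ring
    have f21 : psd m n (fun i => ((kR r lam mu i * lam i : ℝ) : ℂ)) * psd n n paC + MuC * psd m n pcC
        = psd m n pcC * psd n n daC := by
      rw [hMuC, psd_mul, psd_mul, psd_mul, psd_add]
      apply psd_ext
      intro i him hin
      rw [if_pos hin, if_pos him, if_pos hin]
      by_cases hir : i < r
      · have ha := haf i hir
        have hb := hmunonpos i hir
        have hc2 := kR_sq hir ha hb
        simp only [hpaC, hpcC, hdaC, paR, pcR, daR, tpR, tmR, if_pos hir]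
        norm_cast
        linear_combination L3 hc2 rfl
      · simp only [hpaC, hpcC, hdaC, paR, pcR, daR, if_neg hir, kR_zero hir]
        push_cast
        ring
    have f22 : psd m n (fun i => ((kR r lam mu i * lam i : ℝ) : ℂ)) * psd n m pbC + MuC * psd m m pdC
        = psd m m pdC * psd m m dbC := by
      rw [hMuC, psd_mul, psd_mul, psd_mul, psd_add]
      apply psd_ext
      intro i him _
      rw [if_pos him, if_pos him]
      by_cases hir : i < r
      · have hin : i < n := lt_of_lt_of_le hir hrn
        have ha := haf i hir
        have hb := hmunonpos i hir
        have hc2 := kR_sq hir ha hb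
        rw [if_pos hin]
        simp only [hpbC, hpdC, hdbC, pbR, pdR, dbR, tpR, tmR, if_pos hir]
        norm_cast
        linear_combination L4 hc2 rfl
      · simp only [hpbC, hpdC, hdbC, pbR, pdR, dbR, if_neg hir, kR_zero hir]
        split_ifs <;> push_cast <;> ring
    have hS0P0 : S0 * P0 = P0 * DB := by
      rw [hS0, hP0, hDB, Matrix.fromBlocks_multiply, Matrix.fromBlocks_multiply]
      simp only [Matrix.mul_zero, Matrix.zero_mul, add_zero, zero_add]
      rw [f11, f12, f21, f22]
    have hS0eqn : S0 = P0 * (DB * Q0) := by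
      calc S0 = S0 * (P0 * Q0) := by rw [hP0Q0, Matrix.mul_one]
        _ = S0 * P0 * Q0 := by rw [Matrix.mul_assoc]
        _ = P0 * DB * Q0 := by rw [hS0P0]
        _ = P0 * (DB * Q0) := by rw [Matrix.mul_assoc]
    have hUbU : Ub * Ubᴴ = 1 := by
      rw [hUbdef, Matrix.fromBlocks_conjTranspose, Matrix.fromBlocks_multiply]
      simp only [Matrix.mul_zero, Matrix.zero_mul, add_zero, zero_add,
        Matrix.conjTranspose_zero]
      rw [hUU', hVV', Matrix.fromBlocks_one]
    have hPQ : (Ub * P0) * (Q0 * Ubᴴ) = 1 := by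
      rw [show (Ub * P0) * (Q0 * Ubᴴ) = Ub * ((P0 * Q0) * Ubᴴ) by
        simp only [Matrix.mul_assoc]]
      rw [hP0Q0, Matrix.one_mul, hUbU]
    have hPinv : (Ub * P0)⁻¹ = Q0 * Ubᴴ := Matrix.inv_eq_right_inv hPQ
    have hblock : Matrix.fromBlocks A (-(A * (U * K0 * Vᴴ))) ((U * K0 * Vᴴ)ᴴ * A) D
        = Ub * S0 * Ubᴴ := by
      have hnAK : -(A * (U * K0 * Vᴴ))
          = U * psd n m (fun i => -((lam i * kR r lam mu i : ℝ) : ℂ)) * Vᴴ := by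
        rw [hAK, ← psd_neg]
        simp only [Matrix.neg_mul, Matrix.mul_neg]
      rw [hnAK, hKA, hAeq', hDeq']
      rw [hUbdef, hS0, Matrix.fromBlocks_conjTranspose, Matrix.fromBlocks_multiply,
        Matrix.fromBlocks_multiply]
      simp only [Matrix.mul_zero, Matrix.zero_mul, add_zero, zero_add,
        Matrix.conjTranspose_zero, Matrix.mul_assoc]
    refine ⟨Ub * P0,
      Sum.elim (fun i : Fin n => daR r lam mu (i : ℕ)) (fun j : Fin m => dbR r lam mu (j : ℕ)),
      (Matrix.isUnit_iff_isUnit_det _).mpr (Matrix.isUnit_det_of_right_inverse hPQ), ?_, ?_⟩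
    · intro idx
      cases idx with
      | inl i =>
        simp only [Sum.elim_inl, daR]
        split_ifs with h
        · exact tpR_pos (hsum _ h)
        · exact hlampos i i.isLt
      | inr j =>
        simp only [Sum.elim_inr, dbR]
        split_ifs with h
        · exact tmR_pos (hsum _ h)
        · exact hmupos j (by omega) j.isLt
    · have hdiag : (Matrix.diagonal (fun idx =>
          ((Sum.elim (fun i : Fin n => daR r lam mu (i : ℕ)) (fun j : Fin m => dbR r lam mu (j : ℕ)) idx : ℝ) : ℂ))
          : Matrix (Fin n ⊕ Fin m) (Fin n ⊕ Fin m) ℂ) = DB := by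
        rw [hDB, hdaC, hdbC, psd_diagonal, psd_diagonal, Matrix.fromBlocks_diagonal]
        congr 1
        funext idx
        cases idx <;> rfl
      rw [hdiag, hPinv, hblock, hS0eqn]
      simp only [Matrix.mul_assoc]
end

section
/- Let A ∈ ℂ^{n×n} be positive definite, let K ∈ ℂ^{n×m} with ‖K‖ < 1, and define S_+ := [[A, −AK],[K*A, −K*AK]] ∈ ℂ^{(n+m)×(n+m)} and C := (I − KK*)^{1/2} A (I − KK*)^{1/2} ∈ ℂ^{n×n}. Equip ℂ^{n+m} with the indefinite inner product [x, y] := Σ_{i=1}^{n} x_i·conj(y_i) − Σ_{j=1}^{m} x_{n+j}·conj(y_{n+j}). Then for every f ∈ ℂ^{n}, setting g := (f, K*f) ∈ ℂ^{n+m} and h := (I − KK*)^{1/2} f ∈ ℂ^{n}, one has [S_+ g, g] = ⟨C h, h⟩ and [g, g] = ‖h‖²; in particular [S_+ g, g] > 0 for all f ≠ 0, and the set of values [S_+ g, g]/[g, g] over f ≠ 0 coincides with the numerical range of the positive definite matrix C. -/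
open scoped Matrix ComplexOrder

/-- The positive semidefinite square root of a positive semidefinite matrix
(removed from Mathlib; restored here with its old definition). -/
noncomputable def Matrix.PosSemidef.sqrt {n : Type*} [Fintype n] [DecidableEq n] {𝕜 : Type*} [RCLike 𝕜]
    {A : Matrix n n 𝕜} (hA : A.PosSemidef) : Matrix n n 𝕜 :=
  hA.1.eigenvectorUnitary.1 * Matrix.diagonal ((↑) ∘ (√·) ∘ hA.1.eigenvalues) *
  (star hA.1.eigenvectorUnitary : Matrix n n 𝕜)

/-- The standard indefinite inner product `[x,y] = ∑_{i<n} xᵢ·conj(yᵢ) − ∑_{j<m} x_{n+j}·conj(y_{n+j})`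
on `ℂ^{n+m} = ℂ^n × ℂ^m`. -/
noncomputable def jip {n m : ℕ} (x y : (Fin n ⊕ Fin m) → ℂ) : ℂ :=
  ∑ i : Fin n, x (Sum.inl i) * (starRingEnd ℂ) (y (Sum.inl i)) -
  ∑ j : Fin m, x (Sum.inr j) * (starRingEnd ℂ) (y (Sum.inr j))

/-- The standard inner product on `ℂ^n`. -/
noncomputable def ip {n : ℕ} (x y : Fin n → ℂ) : ℂ :=
  ∑ i : Fin n, x i * (starRingEnd ℂ) (y i)

lemma aux_sqrt_herm {n : ℕ} {A : Matrix (Fin n) (Fin n) ℂ} (hA : A.PosSemidef) :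
    (hA.sqrt)ᴴ = hA.sqrt := by
  unfold Matrix.PosSemidef.sqrt
  rw [Matrix.conjTranspose_mul, Matrix.conjTranspose_mul, Matrix.diagonal_conjTranspose,
    Matrix.star_eq_conjTranspose, Matrix.conjTranspose_conjTranspose, Matrix.mul_assoc]
  congr 3
  funext i
  simp

lemma aux_sqrt_mul_self {n : ℕ} {A : Matrix (Fin n) (Fin n) ℂ} (hA : A.PosSemidef) :
    hA.sqrt * hA.sqrt = A := by
  unfold Matrix.PosSemidef.sqrt
  have hU : (star hA.1.eigenvectorUnitary : Matrix (Fin n) (Fin n) ℂ) *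
      hA.1.eigenvectorUnitary.1 = 1 := Unitary.coe_star_mul_self _
  have hD : Matrix.diagonal (((↑) ∘ (√·) ∘ hA.1.eigenvalues) : Fin n → ℂ) *
      Matrix.diagonal ((↑) ∘ (√·) ∘ hA.1.eigenvalues) =
      Matrix.diagonal (RCLike.ofReal ∘ hA.1.eigenvalues) := by
    rw [Matrix.diagonal_mul_diagonal]
    congr 1
    funext i
    simp only [Function.comp_apply]
    rw [← Complex.ofReal_mul, Real.mul_self_sqrt (hA.eigenvalues_nonneg i)]
    rfl
  calc _ = hA.1.eigenvectorUnitary.1 * (Matrix.diagonal (((↑) ∘ (√·) ∘ hA.1.eigenvalues) : Fin n → ℂ) *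
      ((star hA.1.eigenvectorUnitary : Matrix (Fin n) (Fin n) ℂ) * hA.1.eigenvectorUnitary.1) *
      Matrix.diagonal ((↑) ∘ (√·) ∘ hA.1.eigenvalues)) *
      (star hA.1.eigenvectorUnitary : Matrix (Fin n) (Fin n) ℂ) := by
        simp only [Matrix.mul_assoc]
        rfl
    _ = A := by
        rw [hU, Matrix.mul_one, hD]
        exact (hA.1.spectral_theorem).symm

lemma aux_dot_shift {n p : ℕ} (N M : Matrix (Fin p) (Fin n) ℂ) (v w : Fin n → ℂ) :
    star (N.mulVec v) ⬝ᵥ (M.mulVec w) = star v ⬝ᵥ ((Nᴴ * M).mulVec w) := by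
  rw [Matrix.star_mulVec, Matrix.dotProduct_mulVec, Matrix.vecMul_vecMul,
    ← Matrix.dotProduct_mulVec]

lemma aux_ip_eq {n : ℕ} (x y : Fin n → ℂ) : ip x y = star y ⬝ᵥ x := by
  simp only [ip, dotProduct, Pi.star_apply, RCLike.star_def]
  exact Finset.sum_congr rfl fun i _ => mul_comm _ _

lemma aux_jip_elim {n m : ℕ} (a c : Fin n → ℂ) (b d : Fin m → ℂ) :
    jip (Sum.elim a b) (Sum.elim c d) = star c ⬝ᵥ a - star d ⬝ᵥ b := by
  simp only [jip, Sum.elim_inl, Sum.elim_inr, dotProduct, Pi.star_apply, RCLike.star_def]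
  congr 1 <;> exact Finset.sum_congr rfl fun i _ => mul_comm _ _

lemma specNorm_conjTranspose {n m : ℕ} (K : Matrix (Fin n) (Fin m) ℂ) :
    specNorm Kᴴ = specNorm K := by
  unfold specNorm
  rw [Matrix.toEuclideanLin_conjTranspose_eq_adjoint, LinearMap.adjoint_toContinuousLinearMap]
  exact ContinuousLinearMap.adjoint.norm_map _

lemma posDef_one_sub {n m : ℕ} (K : Matrix (Fin n) (Fin m) ℂ) (hK : specNorm K < 1)
    (h1 : (1 - K * Kᴴ).PosSemidef) : (1 - K * Kᴴ).PosDef := by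
  refine Matrix.PosDef.of_dotProduct_mulVec_pos h1.isHermitian fun x hx => ?_
  have key : star x ⬝ᵥ ((1 - K * Kᴴ).mulVec x)
      = (star x ⬝ᵥ x) - (star (Kᴴ.mulVec x) ⬝ᵥ (Kᴴ.mulVec x)) := by
    rw [Matrix.sub_mulVec, dotProduct_sub, Matrix.one_mulVec, ← Matrix.mulVec_mulVec,
      Matrix.star_mulVec, Matrix.conjTranspose_conjTranspose, ← Matrix.dotProduct_mulVec]
  let X : EuclideanSpace ℂ (Fin n) := (WithLp.equiv 2 (Fin n → ℂ)).symm x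
  let Y : EuclideanSpace ℂ (Fin m) := (WithLp.equiv 2 (Fin m → ℂ)).symm (Kᴴ.mulVec x)
  have hxx : star x ⬝ᵥ x = (‖X‖ : ℂ) ^ 2 := by
    rw [dotProduct_comm, ← EuclideanSpace.inner_toLp_toLp, inner_self_eq_norm_sq_to_K]; rfl
  have hyy : star (Kᴴ.mulVec x) ⬝ᵥ (Kᴴ.mulVec x) = (‖Y‖ : ℂ) ^ 2 := by
    rw [dotProduct_comm, ← EuclideanSpace.inner_toLp_toLp, inner_self_eq_norm_sq_to_K]; rfl
  have hYX : ‖Y‖ ≤ specNorm K * ‖X‖ := by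
    have hYe : Y = LinearMap.toContinuousLinearMap (Matrix.toEuclideanLin Kᴴ) X := by
      show (WithLp.equiv 2 (Fin m → ℂ)).symm (Kᴴ.mulVec x) = _
      rw [LinearMap.coe_toContinuousLinearMap']
      show _ = Matrix.toEuclideanLin Kᴴ ((WithLp.equiv 2 (Fin n → ℂ)).symm x)
      rfl
    rw [hYe, ← specNorm_conjTranspose K]
    exact (LinearMap.toContinuousLinearMap (Matrix.toEuclideanLin Kᴴ)).le_opNorm X
  have hXpos : 0 < ‖X‖ := by
    rw [norm_pos_iff]
    simpa [X] using hx
  have hlt : ‖Y‖ < ‖X‖ := lt_of_le_of_lt hYX (by nlinarith [hXpos])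
  have hpos : (0:ℝ) < ‖X‖ ^ 2 - ‖Y‖ ^ 2 := by nlinarith [norm_nonneg Y]
  rw [key, hxx, hyy]
  have : ((‖X‖:ℂ))^2 - ((‖Y‖:ℂ))^2 = (((‖X‖^2 - ‖Y‖^2 : ℝ)) : ℂ) := by push_cast; ring
  rw [this]
  exact_mod_cast hpos


/-- Let `A ∈ ℂ^{n×n}` be positive definite, `K ∈ ℂ^{n×m}` with `‖K‖ < 1`, and set
`S₊ = [[A, −AK],[KᴴA, −KᴴAK]]` and `C = (I − KKᴴ)^{1/2} A (I − KKᴴ)^{1/2}`.  For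
`f ∈ ℂ^n` put `g = (f, Kᴴf)` and `h = (I − KKᴴ)^{1/2} f`.  Then `[S₊g, g] = ⟨Ch, h⟩` and
`[g, g] = ‖h‖²`; in particular `[S₊g, g] > 0` for `f ≠ 0`, and the values `[S₊g, g]/[g, g]`
over `f ≠ 0` are exactly the values `⟨Ch, h⟩/⟨h, h⟩` over `h ≠ 0` (the numerical range of
the positive definite matrix `C`). -/
theorem Splus_numericalRange
    (n m : ℕ)
    (A : Matrix (Fin n) (Fin n) ℂ) (hA : A.PosDef)
    (K : Matrix (Fin n) (Fin m) ℂ) (hK : specNorm K < 1)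
    (h1 : (1 - K * Kᴴ).PosSemidef)
    (C : Matrix (Fin n) (Fin n) ℂ) (hC : C = h1.sqrt * A * h1.sqrt)
    (Splus : Matrix (Fin n ⊕ Fin m) (Fin n ⊕ Fin m) ℂ)
    (hS : Splus = Matrix.fromBlocks A (-(A * K)) (Kᴴ * A) (-(Kᴴ * A * K))) :
    (∀ f : Fin n → ℂ,
      jip (Splus.mulVec (Sum.elim f (Kᴴ.mulVec f))) (Sum.elim f (Kᴴ.mulVec f)) =
        ip (C.mulVec (h1.sqrt.mulVec f)) (h1.sqrt.mulVec f) ∧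
      jip (Sum.elim f (Kᴴ.mulVec f)) (Sum.elim f (Kᴴ.mulVec f)) =
        ip (h1.sqrt.mulVec f) (h1.sqrt.mulVec f) ∧
      (f ≠ 0 →
        0 < (jip (Splus.mulVec (Sum.elim f (Kᴴ.mulVec f))) (Sum.elim f (Kᴴ.mulVec f))).re ∧
        (jip (Splus.mulVec (Sum.elim f (Kᴴ.mulVec f))) (Sum.elim f (Kᴴ.mulVec f))).im = 0)) ∧
    {z : ℂ | ∃ f : Fin n → ℂ, f ≠ 0 ∧
        z = jip (Splus.mulVec (Sum.elim f (Kᴴ.mulVec f))) (Sum.elim f (Kᴴ.mulVec f)) /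
              jip (Sum.elim f (Kᴴ.mulVec f)) (Sum.elim f (Kᴴ.mulVec f))} =
    {z : ℂ | ∃ h : Fin n → ℂ, h ≠ 0 ∧ z = ip (C.mulVec h) h / ip h h} := by
  set R := h1.sqrt with hR
  set Q : Matrix (Fin n) (Fin n) ℂ := 1 - K * Kᴴ with hQdef
  have hQ : Q.PosDef := posDef_one_sub K hK h1
  have hRH : Rᴴ = R := aux_sqrt_herm h1
  have hRR : R * R = Q := aux_sqrt_mul_self h1
  -- pointwise identities
  have key1 : ∀ f : Fin n → ℂ,
      jip (Splus.mulVec (Sum.elim f (Kᴴ.mulVec f))) (Sum.elim f (Kᴴ.mulVec f)) =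
        star f ⬝ᵥ ((Q * A * Q).mulVec f) := by
    intro f
    rw [hS, Matrix.fromBlocks_mulVec, aux_jip_elim]
    simp only [Sum.elim_comp_inl, Sum.elim_comp_inr]
    rw [Matrix.mulVec_mulVec, Matrix.mulVec_mulVec, ← Matrix.add_mulVec, ← Matrix.add_mulVec,
      aux_dot_shift, Matrix.conjTranspose_conjTranspose, ← dotProduct_sub,
      ← Matrix.sub_mulVec]
    have hM : (A + -(A * K) * Kᴴ) - K * (Kᴴ * A + -(Kᴴ * A * K) * Kᴴ) = Q * A * Q := by
      rw [hQdef]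
      simp only [Matrix.mul_add, Matrix.add_mul, Matrix.mul_sub, Matrix.sub_mul, Matrix.one_mul,
        Matrix.mul_one, Matrix.neg_mul, Matrix.mul_neg, Matrix.mul_assoc]
      abel
    rw [hM]
  have key2 : ∀ f : Fin n → ℂ,
      ip (C.mulVec (R.mulVec f)) (R.mulVec f) = star f ⬝ᵥ ((Q * A * Q).mulVec f) := by
    intro f
    have hM2 : R * (C * R) = Q * A * Q := by
      rw [hC, ← hRR]
      simp only [mul_assoc]
    rw [aux_ip_eq, Matrix.mulVec_mulVec, aux_dot_shift, hRH, hM2]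
  have key3 : ∀ f : Fin n → ℂ,
      jip (Sum.elim f (Kᴴ.mulVec f)) (Sum.elim f (Kᴴ.mulVec f)) = star f ⬝ᵥ (Q.mulVec f) := by
    intro f
    rw [aux_jip_elim, aux_dot_shift, Matrix.conjTranspose_conjTranspose, hQdef,
      Matrix.sub_mulVec, dotProduct_sub, Matrix.one_mulVec]
  have key4 : ∀ f : Fin n → ℂ,
      ip (R.mulVec f) (R.mulVec f) = star f ⬝ᵥ (Q.mulVec f) := by
    intro f
    rw [aux_ip_eq, aux_dot_shift, hRH, hRR]
  have hQne : ∀ f : Fin n → ℂ, f ≠ 0 → Q.mulVec f ≠ 0 := by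
    intro f hf h0
    have := hQ.dotProduct_mulVec_pos hf
    rw [h0, dotProduct_zero] at this
    exact lt_irrefl _ this
  have key5 : ∀ f : Fin n → ℂ, f ≠ 0 → 0 < star f ⬝ᵥ ((Q * A * Q).mulVec f) := by
    intro f hf
    have he : star f ⬝ᵥ ((Q * A * Q).mulVec f)
        = star (Q.mulVec f) ⬝ᵥ (A.mulVec (Q.mulVec f)) := by
      rw [aux_dot_shift, hQ.isHermitian.eq, Matrix.mulVec_mulVec]
    rw [he]
    exact hA.dotProduct_mulVec_pos (hQne f hf)
  have hRinj : ∀ f : Fin n → ℂ, f ≠ 0 → R.mulVec f ≠ 0 := by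
    intro f hf h0
    have := hQ.dotProduct_mulVec_pos hf
    rw [← key4 f, h0] at this
    simp [ip] at this
  constructor
  · intro f
    refine ⟨by rw [key1 f, key2 f], by rw [key3 f, key4 f], fun hf => ?_⟩
    have := key5 f hf
    rw [← key1 f] at this
    rw [Complex.lt_def] at this
    simpa using ⟨this.1, this.2.symm⟩
  · -- set equality
    have hQdet : IsUnit Q.det := hQ.isUnit.map (Matrix.detMonoidHom)
    have hRinv : Invertible R := by
      apply invertibleOfRightInverse R (R * Q⁻¹)
      rw [← mul_assoc, hRR, Matrix.mul_nonsing_inv _ hQdet]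
    ext z
    simp only [Set.mem_setOf_eq]
    constructor
    · rintro ⟨f, hf, rfl⟩
      refine ⟨R.mulVec f, hRinj f hf, ?_⟩
      rw [key1 f, key3 f, key2 f, key4 f]
    · rintro ⟨h, hh, rfl⟩
      refine ⟨(⅟R).mulVec h, ?_, ?_⟩
      · intro h0
        apply hh
        have : R.mulVec ((⅟R).mulVec h) = h := by
          rw [Matrix.mulVec_mulVec, mul_invOf_self, Matrix.one_mulVec]
        rw [← this, h0, Matrix.mulVec_zero]
      · have hhh : R.mulVec ((⅟R).mulVec h) = h := by
          rw [Matrix.mulVec_mulVec, mul_invOf_self, Matrix.one_mulVec]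
        rw [key1, key3, ← key2, ← key4, hhh]
end

section
/- Let A ∈ ℂ^{n×n} be a positive semidefinite Hermitian matrix with eigenvalues λ_1 ≥ … ≥ λ_k > 0 = λ_{k+1} = … = λ_n and let D ∈ ℂ^{m×m} be Hermitian with eigenvalues μ_1 ≤ … ≤ μ_r ≤ 0 < μ_{r+1} ≤ … ≤ μ_m, with p = dim ker D. Let 0 < κ ≤ 1 and assume r − p ≤ k and κ²λ_i + μ_i ≥ 0 for i = 1,…,r−p. For i = 1,…,r−p choose ε_i with −μ_i/λ_i ≤ ε_i ≤ κ², set ε_j = 0 for j = r−p+1,…,r, and define K := U E V* with U, V unitary satisfying A = U·diag(λ_1,…,λ_n)·U*, D = V·diag(μ_1,…,μ_m)·V*, and E ∈ ℂ^{n×m} having (i,i)-entry √ε_i for i ≤ r and zeros elsewhere. Then λ_i + μ_i ≥ 0 for i = 1,…,r−p and every eigenvalue η ∈ ℂ of S = [[A, −AK],[K*A, D]] satisfies Re(η) ≥ 0, i.e., the spectrum of S is contained in the closed complex right half-plane. -/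
open scoped Matrix ComplexOrder

/-- Picking the single term of a conditional sum, condition `c = j`. -/
lemma pick_sum {N : ℕ} (c r : ℕ) (g : Fin N → ℂ) :
    ∑ j : Fin N, (if c = (j : ℕ) ∧ (j : ℕ) < r then g j else 0)
      = if h : c < N ∧ c < r then g ⟨c, h.1⟩ else 0 := by
  by_cases h : c < N ∧ c < r
  · rw [dif_pos h, Finset.sum_eq_single (⟨c, h.1⟩ : Fin N)]
    · exact if_pos ⟨rfl, h.2⟩
    · intro b _ hb
      rw [if_neg]
      rintro ⟨h1, _⟩
      exact hb (Fin.ext h1.symm)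
    · intro habs; exact absurd (Finset.mem_univ _) habs
  · rw [dif_neg h]
    apply Finset.sum_eq_zero
    intro j _
    rw [if_neg]
    rintro ⟨h1, h2⟩
    subst h1
    exact h ⟨j.isLt, h2⟩

/-- Picking the single term of a conditional sum, condition `i = c ∧ P`. -/
lemma pick_sum' {N : ℕ} (c : ℕ) (P : Prop) [Decidable P] (g : Fin N → ℂ) :
    ∑ i : Fin N, (if (i : ℕ) = c ∧ P then g i else 0)
      = if h : c < N ∧ P then g ⟨c, h.1⟩ else 0 := by
  by_cases h : c < N ∧ P
  · rw [dif_pos h, Finset.sum_eq_single (⟨c, h.1⟩ : Fin N)]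
    · exact if_pos ⟨rfl, h.2⟩
    · intro b _ hb
      rw [if_neg]
      rintro ⟨h1, _⟩
      exact hb (Fin.ext h1)
    · intro habs; exact absurd (Finset.mem_univ _) habs
  · rw [dif_neg h]
    apply Finset.sum_eq_zero
    intro i _
    rw [if_neg]
    rintro ⟨h1, h2⟩
    subst h1
    exact h ⟨i.isLt, h2⟩

/-- roots of a real monic quadratic with nonneg trace and determinant have nonneg real part. -/
lemma quad_re_nonneg (l w c : ℝ) (η : ℂ) (ht : 0 ≤ l + w) (hd : 0 ≤ l * w + c)
    (heq : ((l : ℂ) - η) * ((w : ℂ) - η) + (c : ℂ) = 0) : 0 ≤ η.re := by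
  by_contra hlt
  push_neg at hlt
  rw [Complex.ext_iff] at heq
  obtain ⟨h1, h2⟩ := heq
  simp only [Complex.add_re, Complex.add_im, Complex.mul_re, Complex.mul_im, Complex.sub_re,
    Complex.sub_im, Complex.ofReal_re, Complex.ofReal_im, Complex.zero_re, Complex.zero_im,
    zero_sub, neg_neg] at h1 h2
  set a := η.re
  set b := η.im
  -- h1 : (l - a) * (w - a) - (-b) * (-b) + c = 0 (roughly), h2 : (l-a)*(-b) + (-b)*(w-a) = 0
  rcases mul_self_eq_zero.mp (by nlinarith [sq_nonneg b] : ((l + w - 2*a) * b) * ((l + w - 2*a) * b) = 0) with h3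
  rcases mul_eq_zero.mp h3 with h4 | h5
  · nlinarith
  · nlinarith [sq_nonneg (a - l), sq_nonneg b]

lemma mu_zero_of_ker (m r p : ℕ) (hrm : r ≤ m)
    (mu : ℕ → ℝ)
    (hmu : ∀ i j : ℕ, i ≤ j → j < m → mu i ≤ mu j)
    (hmunonpos : ∀ i : ℕ, i < r → mu i ≤ 0)
    (hmupos : ∀ i : ℕ, r ≤ i → i < m → 0 < mu i)
    (V : Matrix (Fin m) (Fin m) ℂ) (hV : V ∈ Matrix.unitaryGroup (Fin m) ℂ)
    (D : Matrix (Fin m) (Fin m) ℂ)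
    (hD : D = V * Matrix.diagonal (fun j : Fin m => (mu j : ℂ)) * Vᴴ)
    (hp : p = Module.finrank ℂ (LinearMap.ker D.mulVecLin)) :
    ∀ j : ℕ, r - p ≤ j → j < r → mu j = 0 := by
  have hVu : IsUnit V := ⟨Unitary.toUnits ⟨V, hV⟩, rfl⟩
  have hVd : IsUnit V.det := (Matrix.isUnit_iff_isUnit_det V).mp hVu
  have hVhd : IsUnit Vᴴ.det := by
    rw [Matrix.det_conjTranspose]
    exact hVd.star
  -- rank of D equals number of nonzero mu's
  have hrank : D.rank = Fintype.card {j : Fin m // mu (j : ℕ) ≠ 0} := by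
    rw [hD, Matrix.rank_mul_eq_left_of_isUnit_det Vᴴ _ hVhd,
      Matrix.rank_mul_eq_right_of_isUnit_det V _ hVd, Matrix.rank_diagonal]
    exact Fintype.card_congr (Equiv.subtypeEquivRight fun j => by
      simp [Complex.ofReal_ne_zero])
  -- rank-nullity
  have hrn : D.rank + Module.finrank ℂ (LinearMap.ker D.mulVecLin) = m := by
    have := LinearMap.finrank_range_add_finrank_ker D.mulVecLin
    rw [Module.finrank_pi] at this
    simpa [Matrix.rank, Fintype.card_fin] using this
  have hcompl : Fintype.card {j : Fin m // mu (j : ℕ) ≠ 0}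
      + Fintype.card {j : Fin m // mu (j : ℕ) = 0} = m := by
    classical
    have := Fintype.card_subtype_compl (fun j : Fin m => mu (j : ℕ) = 0)
    have h2 : Fintype.card {j : Fin m // ¬ mu (j : ℕ) = 0}
        = m - Fintype.card {j : Fin m // mu (j : ℕ) = 0} := by
      simpa [Fintype.card_fin] using this
    have h3 : Fintype.card {j : Fin m // mu (j : ℕ) = 0} ≤ m := by
      simpa [Fintype.card_fin] using
        Fintype.card_subtype_le (fun j : Fin m => mu (j : ℕ) = 0)
    have h4 : Fintype.card {j : Fin m // mu (j : ℕ) ≠ 0}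
        = Fintype.card {j : Fin m // ¬ mu (j : ℕ) = 0} := rfl
    omega
  have hpcard : p = Fintype.card {j : Fin m // mu (j : ℕ) = 0} := by omega
  -- counting argument
  intro j0 hj1 hj2
  by_contra hne
  have hj0m : j0 < m := lt_of_lt_of_le hj2 hrm
  have hneg : mu j0 < 0 := lt_of_le_of_ne (hmunonpos _ hj2) hne
  classical
  have hsub : Fintype.card {j : Fin m // mu (j : ℕ) = 0} ≤ (Finset.Ico (j0 + 1) r).card := by
    rw [Fintype.card_subtype]
    refine Finset.card_le_card_of_injOn (fun j => (j : ℕ)) ?_ ?_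
    · intro j hj
      rw [Finset.mem_coe, Finset.mem_filter] at hj
      have hz : mu (j : ℕ) = 0 := hj.2
      have hjr : (j : ℕ) < r := by
        by_contra hge
        push_neg at hge
        exact absurd hz (ne_of_gt (hmupos _ hge j.isLt))
      have hgt : j0 < (j : ℕ) := by
        by_contra hle
        push_neg at hle
        have := hmu _ _ hle hj0m
        rw [hz] at this
        linarith
      exact Finset.mem_Ico.mpr ⟨hgt, hjr⟩
    · intro a _ b _ hab
      exact Fin.ext hab
  rw [Nat.card_Ico] at hsub
  omega

set_option maxHeartbeats 1000000 in
/-- If `A` is positive semidefinite, `0 < κ ≤ 1` and the parameters satisfy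
`−mu i/lam i ≤ ε i ≤ κ²` for `i < r − p` (and `ε j = 0` for `r − p ≤ j < r`), then
`lam i + mu i ≥ 0` for `i < r − p` and the spectrum of `S = [[A, −AK],[KᴴA, D]]` is
contained in the closed right half-plane. -/
theorem spectrum_in_right_halfplane
    (n m k r p : ℕ) (hkn : k ≤ n) (hrm : r ≤ m) (hpr : p ≤ r)
    (κ : ℝ) (hκ0 : 0 < κ) (hκ1 : κ ≤ 1)
    (lam mu eps : ℕ → ℝ)
    (hlam : ∀ i j : ℕ, i ≤ j → j < n → lam j ≤ lam i)
    (hlampos : ∀ i : ℕ, i < k → 0 < lam i)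
    (hlamzero : ∀ i : ℕ, k ≤ i → i < n → lam i = 0)
    (hmu : ∀ i j : ℕ, i ≤ j → j < m → mu i ≤ mu j)
    (hmunonpos : ∀ i : ℕ, i < r → mu i ≤ 0)
    (hmupos : ∀ i : ℕ, r ≤ i → i < m → 0 < mu i)
    (D : Matrix (Fin m) (Fin m) ℂ)
    (hp : p = Module.finrank ℂ (LinearMap.ker D.mulVecLin))
    (hrpk : r - p ≤ k)
    (hcond : ∀ i : ℕ, i < r - p → 0 ≤ κ ^ 2 * lam i + mu i)
    (hepsl : ∀ i : ℕ, i < r - p → -mu i / lam i ≤ eps i)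
    (hepsu : ∀ i : ℕ, i < r - p → eps i ≤ κ ^ 2)
    (hepsz : ∀ j : ℕ, r - p ≤ j → j < r → eps j = 0)
    (U : Matrix (Fin n) (Fin n) ℂ) (hU : U ∈ Matrix.unitaryGroup (Fin n) ℂ)
    (V : Matrix (Fin m) (Fin m) ℂ) (hV : V ∈ Matrix.unitaryGroup (Fin m) ℂ)
    (A : Matrix (Fin n) (Fin n) ℂ)
    (hA : A = U * Matrix.diagonal (fun i : Fin n => (lam i : ℂ)) * Uᴴ)
    (hD : D = V * Matrix.diagonal (fun j : Fin m => (mu j : ℂ)) * Vᴴ)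
    (E : Matrix (Fin n) (Fin m) ℂ)
    (hE : ∀ (i : Fin n) (j : Fin m),
      E i j = if (i : ℕ) = (j : ℕ) ∧ (j : ℕ) < r then (Real.sqrt (eps j) : ℂ) else 0)
    (K : Matrix (Fin n) (Fin m) ℂ) (hK : K = U * E * Vᴴ)
    (S : Matrix (Fin n ⊕ Fin m) (Fin n ⊕ Fin m) ℂ)
    (hS : S = Matrix.fromBlocks A (-(A * K)) (Kᴴ * A) D) :
    (∀ i : ℕ, i < r - p → 0 ≤ lam i + mu i) ∧
    ∀ η ∈ spectrum ℂ S, 0 ≤ η.re := by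
  have part1 : ∀ i : ℕ, i < r - p → 0 ≤ lam i + mu i := by
    intro i hi
    have h1 := hcond i hi
    have hl := hlampos i (lt_of_lt_of_le hi hrpk)
    have hκ2 : κ ^ 2 ≤ 1 := by nlinarith
    nlinarith [mul_nonneg hl.le (sub_nonneg.mpr hκ2)]
  have hmuzero := mu_zero_of_ker m r p hrm mu hmu hmunonpos hmupos V hV D hD hp
  refine ⟨part1, ?_⟩
  -- notation
  set Λ : Matrix (Fin n) (Fin n) ℂ := Matrix.diagonal (fun i : Fin n => (lam i : ℂ)) with hΛ
  set Ω : Matrix (Fin m) (Fin m) ℂ := Matrix.diagonal (fun j : Fin m => (mu j : ℂ)) with hΩ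
  set T : Matrix (Fin n ⊕ Fin m) (Fin n ⊕ Fin m) ℂ :=
    Matrix.fromBlocks Λ (-(Λ * E)) (Eᴴ * Λ) Ω with hT
  have hU1 : Uᴴ * U = 1 := by
    have := Matrix.mem_unitaryGroup_iff'.mp hU
    simpa [Matrix.star_eq_conjTranspose] using this
  have hU2 : U * Uᴴ = 1 := by
    have := Matrix.mem_unitaryGroup_iff.mp hU
    simpa [Matrix.star_eq_conjTranspose] using this
  have hV1 : Vᴴ * V = 1 := by
    have := Matrix.mem_unitaryGroup_iff'.mp hV
    simpa [Matrix.star_eq_conjTranspose] using this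
  have hV2 : V * Vᴴ = 1 := by
    have := Matrix.mem_unitaryGroup_iff.mp hV
    simpa [Matrix.star_eq_conjTranspose] using this
  set W : Matrix (Fin n ⊕ Fin m) (Fin n ⊕ Fin m) ℂ := Matrix.fromBlocks U 0 0 V with hW
  have hWH : Wᴴ = Matrix.fromBlocks Uᴴ 0 0 Vᴴ := by
    rw [hW, Matrix.fromBlocks_conjTranspose]
    simp
  have hWW : W * Wᴴ = 1 := by
    rw [hW, hWH, Matrix.fromBlocks_multiply]
    simp [hU2, hV2, Matrix.fromBlocks_one]
  have hWW' : Wᴴ * W = 1 := by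
    rw [hW, hWH, Matrix.fromBlocks_multiply]
    simp [hU1, hV1, Matrix.fromBlocks_one]
  -- cancellation helpers
  have hUc : ∀ X : Matrix (Fin n) (Fin m) ℂ, Uᴴ * (U * X) = X := fun X => by
    rw [← Matrix.mul_assoc, hU1, Matrix.one_mul]
  have hUc' : ∀ X : Matrix (Fin n) (Fin n) ℂ, Uᴴ * (U * X) = X := fun X => by
    rw [← Matrix.mul_assoc, hU1, Matrix.one_mul]
  have hAK : A * K = U * (Λ * E) * Vᴴ := by
    rw [hA, hK]
    simp only [Matrix.mul_assoc]
    rw [hUc (E * Vᴴ)]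
  have hKH : Kᴴ = V * (Eᴴ * Uᴴ) := by
    rw [hK]
    simp only [Matrix.conjTranspose_mul, Matrix.conjTranspose_conjTranspose, Matrix.mul_assoc]
  have hKA : Kᴴ * A = V * (Eᴴ * Λ) * Uᴴ := by
    rw [hKH, hA]
    simp only [Matrix.mul_assoc]
    rw [hUc' (Λ * Uᴴ)]
  have hWTW : W * T * Wᴴ = S := by
    rw [hW, hWH, hT, hS, Matrix.fromBlocks_multiply, Matrix.fromBlocks_multiply]
    rw [hAK, hKA, hA, hD]
    simp [Matrix.mul_assoc, Matrix.mul_neg, Matrix.neg_mul]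
  -- spectrum transfer
  have hspec : spectrum ℂ S = spectrum ℂ T := by
    have : S = (⟨W, Wᴴ, hWW, hWW'⟩ : (Matrix (Fin n ⊕ Fin m) (Fin n ⊕ Fin m) ℂ)ˣ) * T
        * (⟨W, Wᴴ, hWW, hWW'⟩ : (Matrix (Fin n ⊕ Fin m) (Fin n ⊕ Fin m) ℂ)ˣ)⁻¹ := by
      simpa using hWTW.symm
    rw [this, spectrum.units_conjugate]
  rw [hspec]
  intro η hη
  by_contra hlt
  push_neg at hlt
  rw [spectrum.mem_iff] at hη
  have hdet : (algebraMap ℂ (Matrix (Fin n ⊕ Fin m) (Fin n ⊕ Fin m) ℂ) η - T).det = 0 := by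
    by_contra h
    exact hη ((Matrix.isUnit_iff_isUnit_det _).mpr (isUnit_iff_ne_zero.mpr h))
  obtain ⟨x, hx0, hxeq⟩ := Matrix.exists_mulVec_eq_zero_iff.mpr hdet
  have hTx : T *ᵥ x = η • x := by
    rw [Matrix.sub_mulVec] at hxeq
    have h1 : (algebraMap ℂ (Matrix (Fin n ⊕ Fin m) (Fin n ⊕ Fin m) ℂ) η) *ᵥ x = η • x := by
      rw [Algebra.algebraMap_eq_smul_one, Matrix.smul_mulVec, Matrix.one_mulVec]
    rw [h1] at hxeq
    exact (sub_eq_zero.mp hxeq).symm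
  set u : Fin n → ℂ := x ∘ Sum.inl with hu_def
  set v : Fin m → ℂ := x ∘ Sum.inr with hv_def
  have hblock : T *ᵥ x = Sum.elim (Λ *ᵥ u + (-(Λ * E)) *ᵥ v) ((Eᴴ * Λ) *ᵥ u + Ω *ᵥ v) := by
    rw [hT]
    exact Matrix.fromBlocks_mulVec Λ (-(Λ * E)) (Eᴴ * Λ) Ω x
  have eqn1 : ∀ i : Fin n, (lam i : ℂ) * u i - ((Λ * E) *ᵥ v) i = η * u i := by
    intro i
    have h := congrFun (hblock.symm.trans hTx) (Sum.inl i)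
    simpa [hΛ, Matrix.mulVec_diagonal, Matrix.neg_mulVec, sub_eq_add_neg, hu_def, hv_def] using h
  have eqn2 : ∀ j : Fin m, ((Eᴴ * Λ) *ᵥ u) j + (mu j : ℂ) * v j = η * v j := by
    intro j
    have h := congrFun (hblock.symm.trans hTx) (Sum.inr j)
    simpa [hΩ, Matrix.mulVec_diagonal, hu_def, hv_def] using h
  have hcoup1 : ∀ i : Fin n, ((Λ * E) *ᵥ v) i
      = if h : (i : ℕ) < m ∧ (i : ℕ) < r
          then (lam i : ℂ) * (Real.sqrt (eps i) : ℂ) * v ⟨i, h.1⟩ else 0 := by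
    intro i
    have hsum : ((Λ * E) *ᵥ v) i
        = ∑ j : Fin m, (if (i : ℕ) = (j : ℕ) ∧ (j : ℕ) < r
            then (lam i : ℂ) * (Real.sqrt (eps j) : ℂ) * v j else 0) := by
      rw [Matrix.mulVec, dotProduct]
      refine Finset.sum_congr rfl fun j _ => ?_
      rw [Matrix.diagonal_mul, hE i j]
      split_ifs with h
      · ring
      · simp
    rw [hsum, pick_sum (i : ℕ) r (fun j => (lam i : ℂ) * (Real.sqrt (eps j) : ℂ) * v j)]
  have hcoup2 : ∀ j : Fin m, ((Eᴴ * Λ) *ᵥ u) j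
      = if h : (j : ℕ) < n ∧ (j : ℕ) < r
          then (Real.sqrt (eps j) : ℂ) * (lam j : ℂ) * u ⟨j, h.1⟩ else 0 := by
    intro j
    have hsum : ((Eᴴ * Λ) *ᵥ u) j
        = ∑ i : Fin n, (if (i : ℕ) = (j : ℕ) ∧ (j : ℕ) < r
            then (Real.sqrt (eps j) : ℂ) * (lam i : ℂ) * u i else 0) := by
      rw [Matrix.mulVec, dotProduct]
      refine Finset.sum_congr rfl fun i _ => ?_
      rw [Matrix.mul_diagonal, Matrix.conjTranspose_apply, hE i j]
      split_ifs with h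
      · rw [Complex.star_def, Complex.conj_ofReal]
      · simp
    rw [hsum, pick_sum' (j : ℕ) ((j : ℕ) < r)
      (fun i => (Real.sqrt (eps j) : ℂ) * (lam i : ℂ) * u i)]
  -- nonreal eigenvalue cannot equal a nonnegative real
  have hne : ∀ c : ℝ, 0 ≤ c → (c : ℂ) - η ≠ 0 := by
    intro c hc h0
    have : η = (c : ℂ) := (sub_eq_zero.mp h0).symm
    rw [this] at hlt
    simp only [Complex.ofReal_re] at hlt
    linarith
  -- the coupled pair analysis
  have pair : ∀ (i : Fin n) (j : Fin m), (i : ℕ) = (j : ℕ) → (j : ℕ) < r - p →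
      u i = 0 ∧ v j = 0 := by
    intro i j hij hjrp
    have hjr : (j : ℕ) < r := lt_of_lt_of_le hjrp (Nat.sub_le r p)
    have hL : 0 < lam (j : ℕ) := hlampos _ (lt_of_lt_of_le hjrp hrpk)
    have hM : mu (j : ℕ) ≤ 0 := hmunonpos _ hjr
    have heps0 : 0 ≤ eps (j : ℕ) :=
      le_trans (div_nonneg (neg_nonneg.mpr hM) hL.le) (hepsl _ hjrp)
    have hss : (Real.sqrt (eps (j : ℕ)) : ℂ) * (Real.sqrt (eps (j : ℕ)) : ℂ)
        = ((eps (j : ℕ) : ℝ) : ℂ) := by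
      rw [← Complex.ofReal_mul, Real.mul_self_sqrt heps0]
    -- equations
    have e1 := eqn1 i
    rw [hcoup1 i] at e1
    rw [dif_pos (show (i : ℕ) < m ∧ (i : ℕ) < r from ⟨hij ▸ j.isLt, hij ▸ hjr⟩)] at e1
    have hvj : (⟨(i : ℕ), hij ▸ j.isLt⟩ : Fin m) = j := Fin.ext hij
    rw [hvj] at e1
    have e2 := eqn2 j
    rw [hcoup2 j] at e2
    rw [dif_pos (show (j : ℕ) < n ∧ (j : ℕ) < r from ⟨hij ▸ i.isLt, hjr⟩)] at e2
    have hui : (⟨(j : ℕ), hij ▸ i.isLt⟩ : Fin n) = i := Fin.ext hij.symm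
    rw [hui] at e2
    rw [hij] at e1
    -- e1 : ↑(lam j) * u i - ↑(lam j) * ↑√(eps j) * v j = η * u i
    -- e2 : ↑√(eps j) * ↑(lam j) * u i + ↑(mu j) * v j = η * v j
    have e1' : ((lam (j : ℕ) : ℂ) - η) * u i
        = (lam (j : ℕ) : ℂ) * (Real.sqrt (eps (j : ℕ)) : ℂ) * v j := by
      linear_combination e1
    have e2' : (Real.sqrt (eps (j : ℕ)) : ℂ) * (lam (j : ℕ) : ℂ) * u i
        = (η - (mu (j : ℕ) : ℂ)) * v j := by
      linear_combination e2
    have key : (((lam (j : ℕ) : ℂ) - η) * (η - (mu (j : ℕ) : ℂ))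
        - ((Real.sqrt (eps (j : ℕ)) : ℂ) * (lam (j : ℕ) : ℂ))
          * ((Real.sqrt (eps (j : ℕ)) : ℂ) * (lam (j : ℕ) : ℂ))) * v j = 0 := by
      linear_combination ((Real.sqrt (eps (j : ℕ)) : ℂ) * (lam (j : ℕ) : ℂ)) * e1'
        - ((lam (j : ℕ) : ℂ) - η) * e2'
    rcases mul_eq_zero.mp key with hz | hv0
    · exfalso
      have hq : ((lam (j : ℕ) : ℂ) - η) * ((mu (j : ℕ) : ℂ) - η)
          + ((eps (j : ℕ) * lam (j : ℕ) ^ 2 : ℝ) : ℂ) = 0 := by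
        push_cast
        linear_combination -hz - ((lam (j : ℕ) : ℂ))^2 * hss
      have hd : 0 ≤ lam (j : ℕ) * mu (j : ℕ) + eps (j : ℕ) * lam (j : ℕ) ^ 2 := by
        have h1 := hepsl _ hjrp
        rw [div_le_iff₀ hL] at h1
        have h2 : (-mu (j : ℕ)) * lam (j : ℕ) ≤ (eps (j : ℕ) * lam (j : ℕ)) * lam (j : ℕ) :=
          mul_le_mul_of_nonneg_right h1 hL.le
        nlinarith [h2]
      have := quad_re_nonneg (lam (j : ℕ)) (mu (j : ℕ)) (eps (j : ℕ) * lam (j : ℕ) ^ 2)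
        η (part1 _ hjrp) hd hq
      linarith
    · refine ⟨?_, hv0⟩
      rw [hv0, mul_zero] at e1'
      exact (mul_eq_zero.mp e1').resolve_left (hne _ hL.le)
  -- uncoupled rows
  have hu0 : ∀ i : Fin n, u i = 0 := by
    intro i
    by_cases hi : (i : ℕ) < r - p
    · exact (pair i ⟨(i : ℕ), lt_of_lt_of_le (lt_of_lt_of_le hi (Nat.sub_le r p)) hrm⟩
        rfl hi).1
    · have hc : ((Λ * E) *ᵥ v) i = 0 := by
        rw [hcoup1 i]
        split_ifs with h
        · have : eps (i : ℕ) = 0 := hepsz _ (not_lt.mp hi) h.2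
          simp [this]
        · rfl
      have e1 := eqn1 i
      rw [hc, sub_zero] at e1
      have hlge : 0 ≤ lam (i : ℕ) := by
        by_cases hik : (i : ℕ) < k
        · exact (hlampos _ hik).le
        · exact le_of_eq (hlamzero _ (not_lt.mp hik) i.isLt).symm
      have : ((lam (i : ℕ) : ℂ) - η) * u i = 0 := by linear_combination e1
      exact (mul_eq_zero.mp this).resolve_left (hne _ hlge)
  -- uncoupled columns
  have hv0 : ∀ j : Fin m, v j = 0 := by
    intro j
    by_cases hj : (j : ℕ) < r - p
    · exact (pair ⟨(j : ℕ), lt_of_lt_of_le (lt_of_lt_of_le hj hrpk) hkn⟩ j rfl hj).2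
    · have hc : ((Eᴴ * Λ) *ᵥ u) j = 0 := by
        rw [hcoup2 j]
        split_ifs with h
        · have : eps (j : ℕ) = 0 := hepsz _ (not_lt.mp hj) h.2
          simp [this]
        · rfl
      have e2 := eqn2 j
      rw [hc, zero_add] at e2
      have hmge : 0 ≤ mu (j : ℕ) := by
        by_cases hjr : (j : ℕ) < r
        · exact le_of_eq (hmuzero _ (not_lt.mp hj) hjr).symm
        · exact (hmupos _ (not_lt.mp hjr) j.isLt).le
      have : ((mu (j : ℕ) : ℂ) - η) * v j = 0 := by linear_combination e2
      exact (mul_eq_zero.mp this).resolve_left (hne _ hmge)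
  exact hx0 (funext fun z => by
    cases z with
    | inl i => exact hu0 i
    | inr j => exact hv0 j)
end
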